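/- arXiv:2306.13228 — 3 statements merged into one kernel-verified Lean document; each statement's English description precedes it below -/
import Mathlib

section
/- For every fixed Δ ≥ 0 and ρ > 0, and for every n = 0, 1, 2, ..., one has β_n(t) ≥ cos(t + π/2) for all t ∈ [−π/2, 0]; consequently ϖ_n ≤ π/2 for every n, and the limit Ψ(ρ,Δ) := lim_{n→∞} ϖ_n satisfies Ψ(ρ,Δ) ≤ π/2. -/
open MeasureTheory Set Filter

/-- `x` solves the delay equation `x''(t) + p(t)·x(t − τ(t)) = 0` on `I` in the
Carathéodory sense: `x` is differentiable on `I` and on `I` its derivative is an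
indefinite integral of `-p(u)·x(u − τ(u))` (so `x` and its derivative are locally
absolutely continuous there, and the equation holds for a.e. `t ∈ I`). -/
def SolvesDDE (p τ x : ℝ → ℝ) (I : Set ℝ) : Prop :=
  (∀ t ∈ I, HasDerivAt x (deriv x t) t) ∧
  (∀ t₀ ∈ I, ∀ t ∈ I, deriv x t = deriv x t₀ - ∫ u in t₀..t, p u * x (u - τ u))

/-- `r` is the solution `r_Δ` of `r''(t) + r(t − Δ) = 0`, `t ≥ 0`, with `r ≡ 1` on
`(-∞,0]` and `r'(0) = 0` (the derivative is an indefinite integral of `-r(· - Δ)`). -/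
def IsDelayCosine (Δ : ℝ) (r : ℝ → ℝ) : Prop :=
  (∀ t ≤ (0:ℝ), r t = 1) ∧
  (∀ t, 0 ≤ t → HasDerivAt r (deriv r t) t) ∧
  (∀ t, 0 ≤ t → deriv r t = - ∫ u in (0:ℝ)..t, r (u - Δ))

/-- `θ` is the first zero of `r` on `[0,∞)`. -/
def IsFirstZero (r : ℝ → ℝ) (θ : ℝ) : Prop :=
  0 < θ ∧ r θ = 0 ∧ ∀ t, 0 ≤ t → t < θ → 0 < r t

/-- `g(w) = ρ·r(θ − w − Δ)·χ_{[−Δ,0]}(w)`. -/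
noncomputable def gAux (ρ Δ θ : ℝ) (r : ℝ → ℝ) : ℝ → ℝ :=
  (Set.Icc (-Δ) (0:ℝ)).indicator fun w => ρ * r (θ - w - Δ)

/-- The double integral `∫_{-c}^0 (∫_{-c}^s max (β w) (g w) dw) ds`. -/
noncomputable def doubleInt (g β : ℝ → ℝ) (c : ℝ) : ℝ :=
  ∫ s in (-c)..(0:ℝ), ∫ w in (-c)..s, max (β w) (g w)

/-- The recursively defined sequences `β_n`, `ϖ_n` associated with `g`. -/
def IsBetaSeq (g : ℝ → ℝ) (β : ℕ → ℝ → ℝ) (ϖ : ℕ → ℝ) : Prop :=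
  (∀ t ≤ (0:ℝ), β 0 t = 1) ∧
  ∀ n : ℕ,
    (0 < ϖ n ∧ doubleInt g (β n) (ϖ n) = 1) ∧
    (∀ t, t ≤ -ϖ n → β (n+1) t = 1) ∧
    (∀ t, -ϖ n ≤ t → t ≤ 0 →
      β (n+1) t = 1 - ∫ s in (-ϖ n)..t, ∫ w in (-ϖ n)..s, max (β n w) (g w))

/-- `x` has a locally absolutely continuous derivative on `[a,b]`, with a.e. second
derivative `w`. -/
def HasSecondDerivAEOn (x w : ℝ → ℝ) (a b : ℝ) : Prop :=
  (∀ t ∈ Set.Icc a b, HasDerivAt x (deriv x t) t) ∧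
  (∀ t ∈ Set.Icc a b, deriv x t = deriv x a + ∫ u in a..t, w u)

private lemma max_eq_half (a b : ℝ) : max a b = (a + b + |a - b|) / 2 := by
  rcases le_total a b with h | h
  · rw [max_eq_right h, abs_of_nonpos (by linarith)]; ring
  · rw [max_eq_left h, abs_of_nonneg (by linarith)]; ring

private lemma II_max {f g : ℝ → ℝ} {a b : ℝ} (hf : IntervalIntegrable f volume a b)
    (hg : IntervalIntegrable g volume a b) :
    IntervalIntegrable (fun x => max (f x) (g x)) volume a b := by
  have h : (fun x => max (f x) (g x)) = fun x => (f x + g x + |f x - g x|) / 2 := by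
    funext x; exact max_eq_half _ _
  rw [h]
  exact ((hf.add hg).add (hf.sub hg).abs).div_const 2

private lemma nonneg_of_concavelike {u u' : ℝ → ℝ} {a b : ℝ} (hab : a < b)
    (hc : ContinuousOn u (Set.Icc a b))
    (hd : ∀ x ∈ Set.Ioo a b, HasDerivAt u (u' x) x)
    (hmono : ∀ x ∈ Set.Ioo a b, ∀ y ∈ Set.Ioo a b, x ≤ y → u' y ≤ u' x)
    (ha : 0 ≤ u a) (hb : 0 ≤ u b) : ∀ t ∈ Set.Icc a b, 0 ≤ u t := by
  intro t ht
  rcases eq_or_lt_of_le ht.1 with h1 | h1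
  · rwa [← h1]
  rcases eq_or_lt_of_le ht.2 with h2 | h2
  · rwa [h2]
  by_contra hu
  push_neg at hu
  obtain ⟨ξ₁, hξ₁, hs1⟩ := exists_hasDerivAt_eq_slope u u' h1
    (hc.mono (Set.Icc_subset_Icc le_rfl ht.2))
    (fun x hx => hd x ⟨hx.1, lt_trans hx.2 h2⟩)
  obtain ⟨ξ₂, hξ₂, hs2⟩ := exists_hasDerivAt_eq_slope u u' h2
    (hc.mono (Set.Icc_subset_Icc ht.1 le_rfl))
    (fun x hx => hd x ⟨lt_trans h1 hx.1, hx.2⟩)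
  have hv1 : u' ξ₁ < 0 := by
    rw [hs1]; exact div_neg_of_neg_of_pos (by linarith) (by linarith [hξ₁.1])
  have hv2 : 0 < u' ξ₂ := by
    rw [hs2]; exact div_pos (by linarith) (by linarith [hξ₂.2])
  have hle := hmono ξ₁ ⟨hξ₁.1, lt_trans hξ₁.2 h2⟩ ξ₂ ⟨lt_trans h1 hξ₂.1, hξ₂.2⟩
    (le_of_lt (lt_trans hξ₁.2 hξ₂.1))
  linarith

private lemma integral_cos_shift (a b : ℝ) :
    ∫ w in a..b, Real.cos (w + Real.pi / 2)
      = Real.sin (b + Real.pi / 2) - Real.sin (a + Real.pi / 2) := by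
  rw [intervalIntegral.integral_comp_add_right (fun x => Real.cos x) (Real.pi / 2)]
  exact integral_cos

private lemma integral_sin_shift (a b : ℝ) :
    ∫ w in a..b, Real.sin (w + Real.pi / 2)
      = Real.cos (a + Real.pi / 2) - Real.cos (b + Real.pi / 2) := by
  rw [intervalIntegral.integral_comp_add_right (fun x => Real.sin x) (Real.pi / 2)]
  exact integral_sin

private lemma contG {M : ℝ → ℝ}
    (hint : ∀ a b : ℝ, a ≤ 0 → b ≤ 0 → IntervalIntegrable M volume a b)
    {c : ℝ} (hc : 0 ≤ c) :
    ContinuousOn (fun s => ∫ w in (-c)..s, M w) (Set.Icc (-c) 0) := by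
  have h0 : -c ≤ (0:ℝ) := by linarith
  have h := intervalIntegral.continuousOn_primitive_interval' (μ := volume)
    (hint (-c) 0 (by linarith) le_rfl) left_mem_uIcc
  rwa [uIcc_of_le h0] at h

private lemma intG {M : ℝ → ℝ}
    (hint : ∀ a b : ℝ, a ≤ 0 → b ≤ 0 → IntervalIntegrable M volume a b)
    {c a b : ℝ} (hc : 0 ≤ c) (ha : a ∈ Set.Icc (-c) 0) (hb : b ∈ Set.Icc (-c) 0) :
    IntervalIntegrable (fun s => ∫ w in (-c)..s, M w) volume a b := by
  have h0 : -c ≤ (0:ℝ) := by linarith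
  have hsub : Set.uIcc a b ⊆ Set.Icc (-c) 0 := by
    rw [← uIcc_of_le h0]
    exact uIcc_subset_uIcc (by rwa [uIcc_of_le h0]) (by rwa [uIcc_of_le h0])
  exact ((contG hint hc).mono hsub).intervalIntegrable

private lemma hasDerivF {M : ℝ → ℝ}
    (hint : ∀ a b : ℝ, a ≤ 0 → b ≤ 0 → IntervalIntegrable M volume a b)
    {c : ℝ} (hc : 0 < c) {x : ℝ} (hx : x ∈ Set.Ioo (-c) 0) :
    HasDerivAt (fun t => ∫ s in (-c)..t, ∫ w in (-c)..s, M w) (∫ w in (-c)..x, M w) x := by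
  have hcont := contG hint hc.le
  apply intervalIntegral.integral_hasDerivAt_right
  · exact intG hint hc.le ⟨le_rfl, by linarith⟩ ⟨hx.1.le, hx.2.le⟩
  · exact (ContinuousOn.stronglyMeasurableAtFilter isOpen_Ioo
      (hcont.mono Set.Ioo_subset_Icc_self)) x hx
  · exact hcont.continuousAt (Icc_mem_nhds hx.1 hx.2)

section
variable {M : ℝ → ℝ}
  (hint : ∀ a b : ℝ, a ≤ 0 → b ≤ 0 → IntervalIntegrable M volume a b)
  (hM0 : ∀ w, w ≤ 0 → 0 ≤ M w)

include hint hM0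

private lemma varpi_le'
    (hM1 : ∀ w, w ≤ -(Real.pi/2) → 1 ≤ M w)
    (hMcos : ∀ w ∈ Set.Icc (-(Real.pi/2)) (0:ℝ), Real.cos (w + Real.pi/2) ≤ M w)
    {c : ℝ} (hc : 0 < c)
    (h1 : (∫ s in (-c)..0, ∫ w in (-c)..s, M w) = 1) : c ≤ Real.pi/2 := by
  by_contra hgt
  push_neg at hgt
  have hπ : 0 < Real.pi / 2 := by positivity
  have hcm : -c ≤ -(Real.pi/2) := by linarith
  have hpm : -(Real.pi/2) ≤ (0:ℝ) := by linarith
  set G := fun s => ∫ w in (-c)..s, M w with hG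
  have hGcont : ContinuousOn G (Set.Icc (-c) 0) := contG hint hc.le
  have hGnn : ∀ s ∈ Set.Icc (-c) (0:ℝ), 0 ≤ G s := by
    intro s hs
    exact intervalIntegral.integral_nonneg hs.1 (fun w hw => hM0 w (le_trans hw.2 hs.2))
  have key1 : ∀ s ∈ Set.Icc (-(Real.pi/2)) (0:ℝ),
      (c - Real.pi/2) + Real.sin (s + Real.pi/2) ≤ G s := by
    intro s hs
    have hsplit : (∫ w in (-c)..(-(Real.pi/2)), M w) + ∫ w in (-(Real.pi/2))..s, M w = G s :=
      intervalIntegral.integral_add_adjacent_intervals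
        (hint _ _ (by linarith) (by linarith))
        (hint _ _ (by linarith) (by linarith [hs.2]))
    have h1' : c - Real.pi/2 ≤ ∫ w in (-c)..(-(Real.pi/2)), M w := by
      have hmm := intervalIntegral.integral_mono_on (μ := volume) (f := fun _ => (1:ℝ)) (g := M)
        hcm (intervalIntegrable_const) (hint _ _ (by linarith) (by linarith))
        (fun w hw => hM1 w hw.2)
      rw [intervalIntegral.integral_const, smul_eq_mul, mul_one] at hmm
      linarith
    have hci : IntervalIntegrable (fun w => Real.cos (w + Real.pi/2)) volume (-(Real.pi/2)) s :=
      (Real.continuous_cos.comp (continuous_id.add continuous_const)).intervalIntegrable _ _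
    have h2'' : (∫ u in (-(Real.pi/2))..s, Real.cos (u + Real.pi/2))
        ≤ ∫ u in (-(Real.pi/2))..s, M u :=
      intervalIntegral.integral_mono_on (μ := volume) hs.1 hci
        (hint _ _ (by linarith) (by linarith [hs.2]))
        (fun w hw => hMcos w ⟨hw.1, le_trans hw.2 hs.2⟩)
    have hcs : (∫ u in (-(Real.pi/2))..s, Real.cos (u + Real.pi/2))
        = Real.sin (s + Real.pi/2) - Real.sin ((-(Real.pi/2)) + Real.pi/2) :=
      integral_cos_shift _ _
    rw [neg_add_cancel, Real.sin_zero, sub_zero] at hcs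
    linarith
  have hsplit2 : (∫ s in (-c)..(-(Real.pi/2)), G s) + ∫ s in (-(Real.pi/2))..0, G s
      = ∫ s in (-c)..0, G s :=
    intervalIntegral.integral_add_adjacent_intervals
      (intG hint hc.le ⟨le_rfl, by linarith⟩ ⟨hcm, hpm⟩)
      (intG hint hc.le ⟨hcm, hpm⟩ ⟨by linarith, le_rfl⟩)
  have hA : 0 ≤ ∫ s in (-c)..(-(Real.pi/2)), G s :=
    intervalIntegral.integral_nonneg hcm (fun s hs => hGnn s ⟨hs.1, le_trans hs.2 hpm⟩)
  have hB : (Real.pi/2) * (c - Real.pi/2) + 1 ≤ ∫ s in (-(Real.pi/2))..0, G s := by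
    have hsin_int : IntervalIntegrable (fun s => Real.sin (s + Real.pi/2))
        volume (-(Real.pi/2)) 0 :=
      (Real.continuous_sin.comp (continuous_id.add continuous_const)).intervalIntegrable _ _
    have hli : IntervalIntegrable (fun s => (c - Real.pi/2) + Real.sin (s + Real.pi/2))
        volume (-(Real.pi/2)) 0 := intervalIntegrable_const.add hsin_int
    have hGi : IntervalIntegrable G volume (-(Real.pi/2)) 0 :=
      intG hint hc.le ⟨hcm, hpm⟩ ⟨by linarith, le_rfl⟩
    have hm : (∫ s in (-(Real.pi/2))..0, ((c - Real.pi/2) + Real.sin (s + Real.pi/2)))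
        ≤ ∫ s in (-(Real.pi/2))..0, G s :=
      intervalIntegral.integral_mono_on (μ := volume) hpm hli hGi key1
    have hval : (∫ s in (-(Real.pi/2))..0, ((c - Real.pi/2) + Real.sin (s + Real.pi/2)))
        = (Real.pi/2) * (c - Real.pi/2) + 1 := by
      rw [intervalIntegral.integral_add intervalIntegrable_const hsin_int,
        intervalIntegral.integral_const, integral_sin_shift, neg_add_cancel]
      simp [Real.cos_pi_div_two, Real.cos_zero]
    linarith
  nlinarith [hsplit2, hA, hB, h1, hπ, hgt]


private lemma ge_cos'
    (hMcos : ∀ w ∈ Set.Icc (-(Real.pi/2)) (0:ℝ), Real.cos (w + Real.pi/2) ≤ M w)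
    {c : ℝ} (hc : 0 < c) (hcle : c ≤ Real.pi/2)
    (h1 : (∫ s in (-c)..0, ∫ w in (-c)..s, M w) = 1) :
    ∀ t ∈ Set.Icc (-c) (0:ℝ),
      Real.cos (t + Real.pi/2) ≤ 1 - ∫ s in (-c)..t, ∫ w in (-c)..s, M w := by
  set G := fun s => ∫ w in (-c)..s, M w with hG
  set u := fun t => (1 - ∫ s in (-c)..t, G s) - Real.cos (t + Real.pi/2) with hu
  have main : ∀ t ∈ Set.Icc (-c) (0:ℝ), 0 ≤ u t := by
    apply nonneg_of_concavelike (u' := fun x => Real.sin (x + Real.pi/2) - G x)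
      (by linarith : -c < (0:ℝ))
    · have hF : ContinuousOn (fun t => ∫ s in (-c)..t, G s) (Set.Icc (-c) 0) := by
        have h := intervalIntegral.continuousOn_primitive_interval' (μ := volume)
          (intG hint hc.le ⟨le_rfl, by linarith⟩ ⟨by linarith, le_rfl⟩) left_mem_uIcc
        rwa [uIcc_of_le (by linarith : -c ≤ (0:ℝ))] at h
      exact (continuousOn_const.sub hF).sub
        ((Real.continuous_cos.comp (continuous_id.add continuous_const)).continuousOn)
    · intro x hx
      have hF := hasDerivF hint hc hx
      have hcos : HasDerivAt (fun t => Real.cos (t + Real.pi/2))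
          (-Real.sin (x + Real.pi/2)) x := by
        have h := (Real.hasDerivAt_cos (x + Real.pi/2)).comp x
          ((hasDerivAt_id x).add_const (Real.pi/2))
        simpa [Function.comp_def] using h
      have h := ((hasDerivAt_const x (1:ℝ)).sub hF).sub hcos
      exact h.congr_deriv (by ring)
    · intro x hx y hy hxy
      have hGd : G y - G x = ∫ w in x..y, M w :=
        intervalIntegral.integral_interval_sub_left
          (hint _ _ (by linarith) hy.2.le) (hint _ _ (by linarith) hx.2.le)
      have hcs : (∫ w in x..y, Real.cos (w + Real.pi/2))
          = Real.sin (y + Real.pi/2) - Real.sin (x + Real.pi/2) := integral_cos_shift _ _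
      have hm : (∫ w in x..y, Real.cos (w + Real.pi/2)) ≤ ∫ w in x..y, M w := by
        apply intervalIntegral.integral_mono_on (μ := volume) hxy
          ((Real.continuous_cos.comp (continuous_id.add continuous_const)).intervalIntegrable _ _)
          (hint _ _ hx.2.le hy.2.le)
        intro w hw
        exact hMcos w ⟨by linarith [hw.1, hx.1], by linarith [hw.2, hy.2]⟩
      show Real.sin (y + Real.pi/2) - G y ≤ Real.sin (x + Real.pi/2) - G x
      linarith
    · show 0 ≤ u (-c)
      rw [hu]
      simp only [intervalIntegral.integral_same]
      have := Real.cos_le_one (-c + Real.pi/2)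
      linarith
    · show 0 ≤ u 0
      rw [hu]
      have hGc : (∫ s in (-c)..(0:ℝ), G s) = 1 := h1
      simp [hGc, Real.cos_pi_div_two]
  intro t ht
  have h := main t ht
  rw [hu] at h
  simp only at h
  linarith

private lemma double_mono' {M' : ℝ → ℝ}
    (hint' : ∀ a b : ℝ, a ≤ 0 → b ≤ 0 → IntervalIntegrable M' volume a b)
    {c : ℝ} (hc : 0 ≤ c) (hle : ∀ w, w ≤ (0:ℝ) → M w ≤ M' w) :
    (∫ s in (-c)..0, ∫ w in (-c)..s, M w) ≤ ∫ s in (-c)..0, ∫ w in (-c)..s, M' w := by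
  apply intervalIntegral.integral_mono_on (μ := volume) (by linarith)
    (intG hint hc ⟨le_rfl, by linarith⟩ ⟨by linarith, le_rfl⟩)
    (intG hint' hc ⟨le_rfl, by linarith⟩ ⟨by linarith, le_rfl⟩)
  intro s hs
  exact intervalIntegral.integral_mono_on hs.1 (hint _ _ (by linarith) hs.2)
    (hint' _ _ (by linarith) hs.2) (fun w hw => hle w (le_trans hw.2 hs.2))

private lemma double_strict'
    (hMcos : ∀ w ∈ Set.Icc (-(Real.pi/2)) (0:ℝ), Real.cos (w + Real.pi/2) ≤ M w)
    {c1 c2 : ℝ} (h0 : 0 < c1) (h12 : c1 < c2) (h2 : c2 ≤ Real.pi/2) :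
    (∫ s in (-c1)..0, ∫ w in (-c1)..s, M w) < ∫ s in (-c2)..0, ∫ w in (-c2)..s, M w := by
  have hπ := Real.pi_pos
  have h21 : -c2 ≤ -c1 := by linarith
  have h10 : -c1 ≤ (0:ℝ) := by linarith
  set G1 := fun s => ∫ w in (-c1)..s, M w with hG1
  set G2 := fun s => ∫ w in (-c2)..s, M w with hG2
  set K := ∫ w in (-c2)..(-c1), M w with hK
  have hsplitG : ∀ s, s ≤ (0:ℝ) → K + G1 s = G2 s := fun s hs =>
    intervalIntegral.integral_add_adjacent_intervals
      (hint _ _ (by linarith) (by linarith)) (hint _ _ (by linarith) hs)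
  have hκ : Real.sin (-c1 + Real.pi/2) - Real.sin (-c2 + Real.pi/2) ≤ K := by
    have hci : IntervalIntegrable (fun w => Real.cos (w + Real.pi/2)) volume (-c2) (-c1) :=
      (Real.continuous_cos.comp (continuous_id.add continuous_const)).intervalIntegrable _ _
    have hmm := intervalIntegral.integral_mono_on (μ := volume) h21 hci
      (hint _ _ (by linarith) (by linarith))
      (fun w hw => hMcos w ⟨by linarith [hw.1], by linarith [hw.2]⟩)
    have hcs : (∫ w in (-c2)..(-c1), Real.cos (w + Real.pi/2))
        = Real.sin (-c1 + Real.pi/2) - Real.sin (-c2 + Real.pi/2) := integral_cos_shift _ _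
    linarith
  have hκpos : 0 < Real.sin (-c1 + Real.pi/2) - Real.sin (-c2 + Real.pi/2) := by
    have hmono := Real.strictMonoOn_sin (a := -c2 + Real.pi/2) (b := -c1 + Real.pi/2)
      ⟨by linarith, by linarith⟩ ⟨by linarith, by linarith⟩ (by linarith)
    linarith
  have hG2nn : ∀ s ∈ Set.Icc (-c2) (0:ℝ), 0 ≤ G2 s := fun s hs =>
    intervalIntegral.integral_nonneg hs.1 (fun w hw => hM0 w (le_trans hw.2 hs.2))
  have hsplit : (∫ s in (-c2)..(-c1), G2 s) + ∫ s in (-c1)..0, G2 s = ∫ s in (-c2)..0, G2 s :=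
    intervalIntegral.integral_add_adjacent_intervals
      (intG hint (by linarith) ⟨le_rfl, by linarith⟩ ⟨h21, h10⟩)
      (intG hint (by linarith) ⟨h21, h10⟩ ⟨by linarith, le_rfl⟩)
  have hA : 0 ≤ ∫ s in (-c2)..(-c1), G2 s :=
    intervalIntegral.integral_nonneg h21 (fun s hs => hG2nn s ⟨hs.1, le_trans hs.2 h10⟩)
  have hB : (∫ s in (-c1)..0, G2 s) = c1 * K + ∫ s in (-c1)..0, G1 s := by
    have hcongr : (∫ s in (-c1)..0, G2 s) = ∫ s in (-c1)..0, (K + G1 s) := by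
      apply intervalIntegral.integral_congr
      intro s hs
      rw [uIcc_of_le h10] at hs
      exact (hsplitG s hs.2).symm
    rw [hcongr, intervalIntegral.integral_add intervalIntegrable_const
      (intG hint (by linarith) ⟨le_rfl, by linarith⟩ ⟨by linarith, le_rfl⟩),
      intervalIntegral.integral_const]
    simp [smul_eq_mul]
    rfl
  nlinarith [hsplit, hA, hB, hκ, hκpos, h0]

private lemma second_le' {M2 : ℝ → ℝ}
    (hint2 : ∀ a b : ℝ, a ≤ 0 → b ≤ 0 → IntervalIntegrable M2 volume a b)
    (hM20 : ∀ w, w ≤ 0 → 0 ≤ M2 w)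
    (hle : ∀ w, w ≤ (0:ℝ) → M2 w ≤ M w)
    {c1 c2 : ℝ} (h01 : 0 < c1) (h12 : c1 ≤ c2)
    (e1 : (∫ s in (-c1)..0, ∫ w in (-c1)..s, M w) = 1)
    (e2 : (∫ s in (-c2)..0, ∫ w in (-c2)..s, M2 w) = 1) :
    ∀ t ∈ Set.Icc (-c1) (0:ℝ),
      (∫ s in (-c1)..t, ∫ w in (-c1)..s, M w) ≤ ∫ s in (-c2)..t, ∫ w in (-c2)..s, M2 w := by
  have h02 : 0 < c2 := lt_of_lt_of_le h01 h12
  set D := fun t => (∫ s in (-c2)..t, ∫ w in (-c2)..s, M2 w)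
                    - ∫ s in (-c1)..t, ∫ w in (-c1)..s, M w with hD
  have main : ∀ t ∈ Set.Icc (-c1) (0:ℝ), 0 ≤ D t := by
    apply nonneg_of_concavelike
      (u' := fun x => (∫ w in (-c2)..x, M2 w) - ∫ w in (-c1)..x, M w)
      (by linarith : -c1 < (0:ℝ))
    · have hF1 : ContinuousOn (fun t => ∫ s in (-c1)..t, ∫ w in (-c1)..s, M w)
          (Set.Icc (-c1) 0) := by
        have h := intervalIntegral.continuousOn_primitive_interval' (μ := volume)
          (intG hint h01.le ⟨le_rfl, by linarith⟩ ⟨by linarith, le_rfl⟩) left_mem_uIcc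
        rwa [uIcc_of_le (by linarith : -c1 ≤ (0:ℝ))] at h
      have hF2 : ContinuousOn (fun t => ∫ s in (-c2)..t, ∫ w in (-c2)..s, M2 w)
          (Set.Icc (-c1) 0) := by
        have h := intervalIntegral.continuousOn_primitive_interval' (μ := volume)
          (intG hint2 h02.le ⟨le_rfl, by linarith⟩ ⟨by linarith, le_rfl⟩) left_mem_uIcc
        rw [uIcc_of_le (by linarith : -c2 ≤ (0:ℝ))] at h
        exact h.mono (Set.Icc_subset_Icc (by linarith) le_rfl)
      exact hF2.sub hF1
    · intro x hx
      exact (hasDerivF hint2 h02 ⟨by linarith [hx.1], hx.2⟩).sub (hasDerivF hint h01 hx)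
    · intro x hx y hy hxy
      have h2d : (∫ w in (-c2)..y, M2 w) - ∫ w in (-c2)..x, M2 w = ∫ w in x..y, M2 w :=
        intervalIntegral.integral_interval_sub_left
          (hint2 _ _ (by linarith) hy.2.le) (hint2 _ _ (by linarith) hx.2.le)
      have h1d : (∫ w in (-c1)..y, M w) - ∫ w in (-c1)..x, M w = ∫ w in x..y, M w :=
        intervalIntegral.integral_interval_sub_left
          (hint _ _ (by linarith) hy.2.le) (hint _ _ (by linarith) hx.2.le)
      have hm : (∫ w in x..y, M2 w) ≤ ∫ w in x..y, M w :=
        intervalIntegral.integral_mono_on hxy (hint2 _ _ hx.2.le hy.2.le)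
          (hint _ _ hx.2.le hy.2.le) (fun w hw => hle w (le_trans hw.2 hy.2.le))
      show (∫ w in (-c2)..y, M2 w) - ∫ w in (-c1)..y, M w
          ≤ (∫ w in (-c2)..x, M2 w) - ∫ w in (-c1)..x, M w
      linarith
    · show 0 ≤ D (-c1)
      rw [hD]
      have hz : (∫ s in (-c1)..(-c1), ∫ w in (-c1)..s, M w) = 0 :=
        intervalIntegral.integral_same
      have hp : 0 ≤ ∫ s in (-c2)..(-c1), ∫ w in (-c2)..s, M2 w :=
        intervalIntegral.integral_nonneg (by linarith)
          (fun s hs => intervalIntegral.integral_nonneg hs.1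
            (fun w hw => hM20 w (le_trans hw.2 (le_trans hs.2 (by linarith)))))
      simp only [hz]
      linarith
    · show 0 ≤ D 0
      rw [hD]
      simp only [e1, e2]
      norm_num
  intro t ht
  have h := main t ht
  rw [hD] at h
  simp only at h
  linarith

end

/-- `β_n ≥ cos(· + π/2)` on `[-π/2, 0]`, hence `ϖ_n ≤ π/2` and
`Ψ(ρ,Δ) = lim ϖ_n ≤ π/2`. -/
theorem varpi_bounded_by_pi_div_two
    (Δ ρ : ℝ) (hΔ : 0 ≤ Δ) (hρ : 0 < ρ)
    (r : ℝ → ℝ) (θ : ℝ) (hr : IsDelayCosine Δ r) (hθ : IsFirstZero r θ)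
    (β : ℕ → ℝ → ℝ) (ϖ : ℕ → ℝ) (hβ : IsBetaSeq (gAux ρ Δ θ r) β ϖ) :
    (∀ n : ℕ, ∀ t ∈ Set.Icc (-(Real.pi / 2)) (0:ℝ), Real.cos (t + Real.pi / 2) ≤ β n t) ∧
    (∀ n : ℕ, ϖ n ≤ Real.pi / 2) ∧
    ∃ Ψ : ℝ, Filter.Tendsto ϖ Filter.atTop (nhds Ψ) ∧ Ψ ≤ Real.pi / 2 := by
  obtain ⟨hβ0, hrec⟩ := hβ
  set g := gAux ρ Δ θ r with hgdef
  have hπ : 0 < Real.pi / 2 := by positivity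
  have hrc : Continuous r := by
    rw [continuous_iff_continuousAt]
    intro x
    rcases le_or_gt 0 x with hx | hx
    · exact (hr.2.1 x hx).continuousAt
    · have hev : r =ᶠ[nhds x] fun _ => 1 := by
        filter_upwards [Iio_mem_nhds hx] with y hy
        exact hr.1 y (le_of_lt hy)
      exact (continuousAt_congr hev).mpr continuousAt_const
  have hrpos : ∀ x, x ≤ θ → 0 ≤ r x := by
    intro x hx
    rcases le_or_gt x 0 with h | h
    · rw [hr.1 x h]; norm_num
    · rcases eq_or_lt_of_le hx with he | hlt
      · rw [he, hθ.2.1]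
      · exact (hθ.2.2 x h.le hlt).le
  have hg0 : ∀ w, 0 ≤ g w := by
    intro w
    rw [hgdef]
    unfold gAux
    by_cases hw : w ∈ Set.Icc (-Δ) (0:ℝ)
    · rw [Set.indicator_of_mem hw]
      exact mul_nonneg hρ.le (hrpos _ (by have := hw.1; linarith))
    · rw [Set.indicator_of_notMem hw]
  have hgint : ∀ a b : ℝ, IntervalIntegrable g volume a b := by
    intro a b
    rw [hgdef]
    unfold gAux
    have hfc : Continuous fun w : ℝ => ρ * r (θ - w - Δ) :=
      continuous_const.mul (hrc.comp (by continuity))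
    have hfi := hfc.intervalIntegrable (μ := volume) a b
    rw [intervalIntegrable_iff] at hfi ⊢
    exact hfi.indicator measurableSet_Icc
  have hMint : ∀ n : ℕ, ContinuousOn (β n) (Set.Iic 0) →
      ∀ a b : ℝ, a ≤ 0 → b ≤ 0 →
        IntervalIntegrable (fun w => max (β n w) (g w)) volume a b := by
    intro n hcont a b ha hb
    apply II_max _ (hgint a b)
    apply (hcont.mono ?_).intervalIntegrable
    intro x hx
    rw [Set.mem_uIcc] at hx
    rcases hx with ⟨_, h2⟩ | ⟨_, h2⟩ <;> exact Set.mem_Iic.mpr (by linarith)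
  have hM0 : ∀ (n : ℕ) (w : ℝ), w ≤ 0 → 0 ≤ max (β n w) (g w) :=
    fun n w _ => le_trans (hg0 w) (le_max_right _ _)
  have key : ∀ n : ℕ,
      (∀ t, t ≤ -(Real.pi/2) → β n t = 1) ∧
      (∀ t ∈ Set.Icc (-(Real.pi/2)) (0:ℝ), Real.cos (t + Real.pi/2) ≤ β n t) ∧
      ContinuousOn (β n) (Set.Iic 0) ∧
      (∀ t, t ≤ (0:ℝ) → β (n+1) t ≤ β n t) := by
    intro n
    induction n with
    | zero =>
      refine ⟨?_, ?_, ?_, ?_⟩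
      · intro t ht; exact hβ0 t (by linarith)
      · intro t ht; rw [hβ0 t ht.2]; exact Real.cos_le_one _
      · exact continuousOn_const.congr (fun t ht => hβ0 t ht)
      · intro t ht
        rcases le_or_gt t (-ϖ 0) with h | h
        · rw [(hrec 0).2.1 t h, hβ0 t ht]
        · rw [(hrec 0).2.2 t h.le ht, hβ0 t ht]
          have hnn : 0 ≤ ∫ s in (-ϖ 0)..t, ∫ w in (-ϖ 0)..s, max (β 0 w) (g w) := by
            apply intervalIntegral.integral_nonneg h.le
            intro s hs
            exact intervalIntegral.integral_nonneg hs.1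
              (fun w hw => hM0 0 w (le_trans hw.2 (le_trans hs.2 ht)))
          linarith
    | succ n ih =>
      obtain ⟨ih1, ih2, ih3, ih4⟩ := ih
      have hintn := hMint n ih3
      have hM0n := hM0 n
      have hM1n : ∀ w, w ≤ -(Real.pi/2) → 1 ≤ max (β n w) (g w) := fun w hw =>
        le_trans (le_of_eq (ih1 w hw).symm) (le_max_left _ _)
      have hMcosn : ∀ w ∈ Set.Icc (-(Real.pi/2)) (0:ℝ),
          Real.cos (w + Real.pi/2) ≤ max (β n w) (g w) :=
        fun w hw => le_trans (ih2 w hw) (le_max_left _ _)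
      have hwpos := (hrec n).1.1
      have he1 : (∫ s in (-ϖ n)..0, ∫ w in (-ϖ n)..s, max (β n w) (g w)) = 1 := (hrec n).1.2
      have hπn : ϖ n ≤ Real.pi/2 := varpi_le' hintn hM0n hM1n hMcosn hwpos he1
      have p1 : ∀ t, t ≤ -(Real.pi/2) → β (n+1) t = 1 := fun t ht =>
        (hrec n).2.1 t (by linarith)
      have p2 : ∀ t ∈ Set.Icc (-(Real.pi/2)) (0:ℝ), Real.cos (t + Real.pi/2) ≤ β (n+1) t := by
        intro t ht
        rcases le_or_gt t (-ϖ n) with h | h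
        · rw [(hrec n).2.1 t h]; exact Real.cos_le_one _
        · rw [(hrec n).2.2 t h.le ht.2]
          exact ge_cos' hintn hM0n hMcosn hwpos hπn he1 t ⟨h.le, ht.2⟩
      have p3 : ContinuousOn (β (n+1)) (Set.Iic 0) := by
        set G := fun s => ∫ w in (-ϖ n)..s, max (β n w) (g w) with hG
        have hGint : IntervalIntegrable G volume (-ϖ n) 0 :=
          intG hintn hwpos.le ⟨le_rfl, by linarith⟩ ⟨by linarith, le_rfl⟩
        have hψ : ContinuousOn (fun x => ∫ s in (-ϖ n)..x, G s) (Set.Icc (-ϖ n) 0) := by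
          have h := intervalIntegral.continuousOn_primitive_interval' (μ := volume)
            hGint left_mem_uIcc
          rwa [uIcc_of_le (by linarith : -ϖ n ≤ (0:ℝ))] at h
        have hφ : ContinuousOn (fun t => 1 - ∫ s in (-ϖ n)..(max t (-ϖ n)), G s)
            (Set.Iic 0) := by
          apply continuousOn_const.sub
          apply hψ.comp ((continuous_id.max continuous_const).continuousOn)
          intro t ht
          exact ⟨le_max_right _ _, max_le ht (by linarith)⟩
        apply hφ.congr
        intro t ht
        show β (n+1) t = 1 - ∫ s in (-ϖ n)..(max t (-ϖ n)), G s
        rcases le_or_gt t (-ϖ n) with h | h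
        · rw [(hrec n).2.1 t h, max_eq_right h]
          simp [intervalIntegral.integral_same]
        · rw [(hrec n).2.2 t h.le ht, max_eq_left h.le]
      have hintn1 := hMint (n+1) p3
      have hM1n1 : ∀ w, w ≤ -(Real.pi/2) → 1 ≤ max (β (n+1) w) (g w) := fun w hw =>
        le_trans (le_of_eq (p1 w hw).symm) (le_max_left _ _)
      have hMcosn1 : ∀ w ∈ Set.Icc (-(Real.pi/2)) (0:ℝ),
          Real.cos (w + Real.pi/2) ≤ max (β (n+1) w) (g w) :=
        fun w hw => le_trans (p2 w hw) (le_max_left _ _)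
      have hwpos1 := (hrec (n+1)).1.1
      have he2 : (∫ s in (-ϖ (n+1))..0, ∫ w in (-ϖ (n+1))..s, max (β (n+1) w) (g w)) = 1 :=
        (hrec (n+1)).1.2
      have hmax_le : ∀ w, w ≤ (0:ℝ) → max (β (n+1) w) (g w) ≤ max (β n w) (g w) :=
        fun w hw => max_le_max (ih4 w hw) le_rfl
      have hwmono : ϖ n ≤ ϖ (n+1) := by
        by_contra hlt
        push_neg at hlt
        have hstrict := double_strict' hintn1 (hM0 (n+1)) hMcosn1 hwpos1 hlt hπn
        rw [he2] at hstrict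
        have hle2 := double_mono' hintn1 (hM0 (n+1)) hintn hwpos.le hmax_le
        rw [he1] at hle2
        linarith
      have p4 : ∀ t, t ≤ (0:ℝ) → β (n+1+1) t ≤ β (n+1) t := by
        intro t ht
        rcases le_or_gt t (-ϖ (n+1)) with h | h
        · rw [(hrec (n+1)).2.1 t h, (hrec n).2.1 t (by linarith)]
        rcases le_or_gt t (-ϖ n) with h2 | h2
        · rw [(hrec (n+1)).2.2 t h.le ht, (hrec n).2.1 t h2]
          have hnn : 0 ≤ ∫ s in (-ϖ (n+1))..t, ∫ w in (-ϖ (n+1))..s,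
              max (β (n+1) w) (g w) := by
            apply intervalIntegral.integral_nonneg h.le
            intro s hs
            exact intervalIntegral.integral_nonneg hs.1
              (fun w hw => hM0 (n+1) w (le_trans hw.2 (le_trans hs.2 ht)))
          linarith
        · rw [(hrec (n+1)).2.2 t h.le ht, (hrec n).2.2 t h2.le ht]
          have hsl := second_le' hintn hM0n hintn1 (hM0 (n+1)) hmax_le hwpos hwmono
            he1 he2 t ⟨h2.le, ht⟩
          linarith
      exact ⟨p1, p2, p3, p4⟩
  have hvarpi : ∀ n : ℕ, ϖ n ≤ Real.pi / 2 := by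
    intro n
    obtain ⟨k1, k2, k3, _⟩ := key n
    exact varpi_le' (hMint n k3) (hM0 n)
      (fun w hw => le_trans (le_of_eq (k1 w hw).symm) (le_max_left _ _))
      (fun w hw => le_trans (k2 w hw) (le_max_left _ _))
      (hrec n).1.1 (hrec n).1.2
  have hwm : ∀ n : ℕ, ϖ n ≤ ϖ (n+1) := by
    intro n
    obtain ⟨k1, k2, k3, k4⟩ := key n
    obtain ⟨l1, l2, l3, _⟩ := key (n+1)
    by_contra hlt
    push_neg at hlt
    have hintn := hMint n k3
    have hintn1 := hMint (n+1) l3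
    have hstrict := double_strict' hintn1 (hM0 (n+1))
      (fun w hw => le_trans (l2 w hw) (le_max_left _ _))
      (hrec (n+1)).1.1 hlt (hvarpi n)
    have hd2 : (∫ s in (-ϖ (n+1))..0, ∫ w in (-ϖ (n+1))..s, max (β (n+1) w) (g w)) = 1 :=
      (hrec (n+1)).1.2
    have hd1 : (∫ s in (-ϖ n)..0, ∫ w in (-ϖ n)..s, max (β n w) (g w)) = 1 :=
      (hrec n).1.2
    rw [hd2] at hstrict
    have hle2 := double_mono' hintn1 (hM0 (n+1)) hintn (hrec n).1.1.le
      (fun w hw => max_le_max (k4 w hw) le_rfl)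
    rw [hd1] at hle2
    linarith
  refine ⟨fun n => (key n).2.1, hvarpi, ?_⟩
  have hmono : Monotone ϖ := monotone_nat_of_le_succ hwm
  have hbdd : BddAbove (Set.range ϖ) := by
    refine ⟨Real.pi / 2, ?_⟩
    rintro x ⟨n, rfl⟩
    exact hvarpi n
  exact ⟨⨆ n, ϖ n, tendsto_atTop_ciSup hmono hbdd, ciSup_le hvarpi⟩
end

section
/- Fix Δ ≥ 0. Assume |p(t)| ≤ 1 for almost every t and τ_m ≤ Δ. Let x be a solution of x''(t) + p(t)·x(t − τ(t)) = 0 having a semicycle (a,b), i.e. x(a) = x(b) = 0 and x(t) ≠ 0 for all t ∈ (a,b), and fix any ρ ≥ max_{t∈[a−Δ−θ_Δ, a]} |x(t)| with ρ > 0. Then every point w ∈ (a,b) at which |x(w)| = max_{t∈[a,b]} |x(t)| satisfies w − a ≥ Ψ( ρ / max_{t∈[a,b]} |x(t)| , Δ ). -/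
open MeasureTheory Set Filter

namespace ZD
set_option linter.unusedVariables false
set_option linter.unusedSectionVars false
open intervalIntegral

variable {Δ θ : ℝ} {r : ℝ → ℝ}


variable {Δ θ : ℝ} {r : ℝ → ℝ}

lemma r_cont (hr : IsDelayCosine Δ r) : Continuous r := by
  rw [continuous_iff_continuousAt]
  intro t
  rcases lt_trichotomy t 0 with h | h | h
  · have h1 : ∀ᶠ s in nhds t, (1:ℝ) = r s := by
      filter_upwards [Iio_mem_nhds h] with s hs
      exact (hr.1 s (le_of_lt hs)).symm
    exact continuousAt_const.congr h1
  · exact h ▸ (hr.2.1 0 le_rfl).continuousAt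
  · exact (hr.2.1 t h.le).continuousAt

lemma r_nonneg (hr : IsDelayCosine Δ r) (hθ : IsFirstZero r θ) : ∀ t ≤ θ, 0 ≤ r t := by
  intro t ht
  rcases le_or_gt t 0 with h | h
  · rw [hr.1 t h]; norm_num
  · rcases eq_or_lt_of_le ht with h' | h'
    · rw [h', hθ.2.1]
    · exact (hθ.2.2 t h.le h').le

lemma r_anti (hΔ : 0 ≤ Δ) (hr : IsDelayCosine Δ r) (hθ : IsFirstZero r θ) :
    ∀ s t : ℝ, s ≤ t → t ≤ θ → r t ≤ r s := by
  have hmono : AntitoneOn r (Icc 0 θ) := by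
    apply antitoneOn_of_deriv_nonpos (convex_Icc 0 θ) (r_cont hr).continuousOn
    · intro u hu
      rw [interior_Icc] at hu
      exact (hr.2.1 u hu.1.le).differentiableAt.differentiableWithinAt
    · intro u hu
      rw [interior_Icc] at hu
      rw [hr.2.2 u hu.1.le, neg_nonpos]
      apply integral_nonneg hu.1.le
      intro v hv
      exact r_nonneg hr hθ _ (by simp only [mem_Icc] at hv; linarith [hv.2, hu.2.le])
  intro s t hst htθ
  rcases le_or_gt t 0 with h | h
  · rw [hr.1 t h, hr.1 s (hst.trans h)]
  · rcases le_or_gt s 0 with hs | hs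
    · rw [hr.1 s hs]
      have := hmono (Set.mem_Icc.2 ⟨le_rfl, hθ.1.le⟩) (Set.mem_Icc.2 ⟨h.le, htθ⟩) h.le
      rwa [hr.1 0 le_rfl] at this
    · exact hmono (Set.mem_Icc.2 ⟨hs.le, hst.trans htθ⟩) (Set.mem_Icc.2 ⟨(hs.trans_le hst).le, htθ⟩) hst

lemma r_le_one (hΔ : 0 ≤ Δ) (hr : IsDelayCosine Δ r) (hθ : IsFirstZero r θ) : ∀ t ≤ θ, r t ≤ 1 := by
  intro t ht
  rcases le_or_gt t 0 with h | h
  · rw [hr.1 t h]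
  · have := r_anti hΔ hr hθ 0 t h.le ht
    rwa [hr.1 0 le_rfl] at this

lemma r_deriv_contOn (hr : IsDelayCosine Δ r) : ContinuousOn (deriv r) (Ici 0) := by
  have hc : Continuous fun t : ℝ => - ∫ u in (0:ℝ)..t, r (u - Δ) := by
    apply Continuous.neg
    apply intervalIntegral.continuous_primitive
    intro a b
    exact (((r_cont hr).comp (continuous_id.sub continuous_const))).intervalIntegrable a b
  exact hc.continuousOn.congr (fun t ht => hr.2.2 t ht)

lemma r_deriv_intable (hr : IsDelayCosine Δ r) {α γ : ℝ} (hα : 0 ≤ α) (hγ : 0 ≤ γ) :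
    IntervalIntegrable (deriv r) volume α γ := by
  apply ContinuousOn.intervalIntegrable
  apply (r_deriv_contOn hr).mono
  intro u hu
  rcases Set.mem_uIcc.1 hu with h | h
  · exact hα.trans h.1
  · exact hγ.trans h.1

lemma r_shift_intable (hr : IsDelayCosine Δ r) (d α γ : ℝ) :
    IntervalIntegrable (fun u => r (u - d)) volume α γ := by
  have := r_cont hr
  exact Continuous.intervalIntegrable (by fun_prop) α γ

lemma r_ftc (hr : IsDelayCosine Δ r) {α γ : ℝ} (hα : 0 ≤ α) (hγ : 0 ≤ γ) :
    r γ - r α = ∫ u in α..γ, deriv r u := by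
  symm
  apply integral_eq_sub_of_hasDerivAt
  · intro u hu
    rcases Set.mem_uIcc.1 hu with h | h
    · exact hr.2.1 u (hα.trans h.1)
    · exact hr.2.1 u (hγ.trans h.1)
  · exact r_deriv_intable hr hα hγ

lemma r_lower (hΔ : 0 ≤ Δ) (hr : IsDelayCosine Δ r) (hθ : IsFirstZero r θ) :
    ∀ t, 0 ≤ t → t ≤ θ → 1 - t^2/2 ≤ r t := by
  intro t ht htθ
  have hftc := r_ftc hr (le_refl 0) ht
  rw [hr.1 0 le_rfl] at hftc
  have hmono : ∫ u in (0:ℝ)..t, (-u) ≤ ∫ u in (0:ℝ)..t, deriv r u := by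
    apply integral_mono_on ht (by apply ContinuousOn.intervalIntegrable; fun_prop)
      (r_deriv_intable hr le_rfl ht)
    intro u hu
    simp only [mem_Icc] at hu
    rw [hr.2.2 u hu.1, neg_le_neg_iff]
    calc ∫ v in (0:ℝ)..u, r (v - Δ) ≤ ∫ v in (0:ℝ)..u, (1:ℝ) := by
          apply integral_mono_on hu.1 (r_shift_intable hr Δ 0 u) (intervalIntegrable_const)
          intro v hv
          simp only [mem_Icc] at hv
          exact r_le_one hΔ hr hθ _ (by linarith [hv.2, hu.2, hθ.1.le])
      _ = u := by simp
  have : ∫ u in (0:ℝ)..t, (-u) = -(t^2/2) := by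
    rw [intervalIntegral.integral_neg, integral_id]; ring
  linarith


lemma theta_le (hΔ : 0 ≤ Δ) (hr : IsDelayCosine Δ r) (hθ : IsFirstZero r θ) :
    θ ≤ 9 * Real.sqrt 2 / 8 := by
  have hs2 : (Real.sqrt 2)^2 = 2 := Real.sq_sqrt (by norm_num)
  have hs2p : 0 < Real.sqrt 2 := Real.sqrt_pos.2 (by norm_num)
  by_cases hcase : θ ≤ Real.sqrt 2
  · nlinarith
  push_neg at hcase
  -- lower bound on inner integral over [0, √2]
  have hinner : ∀ t, Real.sqrt 2 ≤ t → t ≤ θ →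
      2 * Real.sqrt 2 / 3 ≤ ∫ v in (0:ℝ)..t, r (v - Δ) := by
    intro t h2t htθ
    have hsplit : ∫ v in (0:ℝ)..t, r (v - Δ)
        = (∫ v in (0:ℝ)..(Real.sqrt 2), r (v - Δ)) + ∫ v in (Real.sqrt 2)..t, r (v - Δ) :=
      (integral_add_adjacent_intervals (r_shift_intable hr Δ _ _) (r_shift_intable hr Δ _ _)).symm
    have h1 : ∫ v in (0:ℝ)..(Real.sqrt 2), (1 - v^2/2) ≤ ∫ v in (0:ℝ)..(Real.sqrt 2), r (v - Δ) := by
      apply integral_mono_on hs2p.le (by apply ContinuousOn.intervalIntegrable; fun_prop)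
        (r_shift_intable hr Δ _ _)
      intro v hv
      simp only [mem_Icc] at hv
      calc 1 - v^2/2 ≤ r v := r_lower hΔ hr hθ v hv.1 (by linarith)
        _ ≤ r (v - Δ) := r_anti hΔ hr hθ _ _ (by linarith) (by linarith)
    have h1v : ∫ v in (0:ℝ)..(Real.sqrt 2), (1 - v^2/2) = 2 * Real.sqrt 2 / 3 := by
      rw [intervalIntegral.integral_sub intervalIntegrable_const
        (by apply ContinuousOn.intervalIntegrable; fun_prop)]
      rw [intervalIntegral.integral_div, integral_pow]
      simp only [intervalIntegral.integral_const, smul_eq_mul, mul_one, sub_zero]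
      have h3 : (Real.sqrt 2)^3 = 2 * Real.sqrt 2 := by
        rw [pow_succ, hs2]
      rw [zero_pow (by norm_num), h3]
      ring
    have h2 : 0 ≤ ∫ v in (Real.sqrt 2)..t, r (v - Δ) := by
      apply integral_nonneg h2t
      intro v hv
      simp only [mem_Icc] at hv
      exact r_nonneg hr hθ _ (by linarith)
    linarith
  -- r √2 ≤ 1/6
  have hr2 : r (Real.sqrt 2) ≤ 1/6 := by
    have hftc := r_ftc hr (le_refl 0) hs2p.le
    rw [hr.1 0 le_rfl] at hftc
    have hub : ∫ u in (0:ℝ)..(Real.sqrt 2), deriv r u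
        ≤ ∫ u in (0:ℝ)..(Real.sqrt 2), (-(u - u^3/6)) := by
      apply integral_mono_on hs2p.le (r_deriv_intable hr le_rfl hs2p.le)
        (by apply ContinuousOn.intervalIntegrable; fun_prop)
      intro u hu
      simp only [mem_Icc] at hu
      rw [hr.2.2 u hu.1]
      have : u - u^3/6 ≤ ∫ v in (0:ℝ)..u, r (v - Δ) := by
        have hcomp : ∫ v in (0:ℝ)..u, (1 - v^2/2) ≤ ∫ v in (0:ℝ)..u, r (v - Δ) := by
          apply integral_mono_on hu.1 (by apply ContinuousOn.intervalIntegrable; fun_prop)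
            (r_shift_intable hr Δ _ _)
          intro v hv
          simp only [mem_Icc] at hv
          calc 1 - v^2/2 ≤ r v := r_lower hΔ hr hθ v hv.1 (by linarith)
            _ ≤ r (v - Δ) := r_anti hΔ hr hθ _ _ (by linarith) (by linarith)
        have hval : ∫ v in (0:ℝ)..u, (1 - v^2/2) = u - u^3/6 := by
          rw [intervalIntegral.integral_sub intervalIntegrable_const
            (by apply ContinuousOn.intervalIntegrable; fun_prop)]
          rw [intervalIntegral.integral_div, integral_pow]
          simp only [intervalIntegral.integral_const, smul_eq_mul, mul_one, sub_zero]
          rw [zero_pow (by norm_num)]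
          ring
        linarith
      linarith
    have hval2 : ∫ u in (0:ℝ)..(Real.sqrt 2), (-(u - u^3/6)) = -(5/6) := by
      rw [intervalIntegral.integral_neg, intervalIntegral.integral_sub
        (by apply ContinuousOn.intervalIntegrable; fun_prop)
        (by apply ContinuousOn.intervalIntegrable; fun_prop)]
      rw [integral_id, intervalIntegral.integral_div, integral_pow]
      have h4 : (Real.sqrt 2)^4 = 4 := by
        have : (Real.sqrt 2)^4 = ((Real.sqrt 2)^2)^2 := by ring
        rw [this, hs2]; norm_num
      rw [zero_pow (by norm_num), h4, hs2]
      norm_num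
    linarith
  -- final
  have hftc2 := r_ftc hr hs2p.le hθ.1.le
  have hub2 : ∫ u in (Real.sqrt 2)..θ, deriv r u
      ≤ ∫ u in (Real.sqrt 2)..θ, (-(2 * Real.sqrt 2 / 3)) := by
    apply integral_mono_on hcase.le (r_deriv_intable hr hs2p.le hθ.1.le)
      intervalIntegrable_const
    intro u hu
    simp only [mem_Icc] at hu
    rw [hr.2.2 u (hs2p.le.trans hu.1)]
    have := hinner u hu.1 hu.2
    linarith
  rw [intervalIntegral.integral_const] at hub2
  rw [hθ.2.1] at hftc2
  simp only [smul_eq_mul] at hub2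
  nlinarith [hs2p, hs2, mul_le_mul_of_nonneg_left hub2 hs2p.le]

noncomputable def Hn (g : ℝ → ℝ) (β : ℕ → ℝ → ℝ) (ϖ : ℕ → ℝ) (n : ℕ) (s : ℝ) : ℝ :=
  ∫ w in (-ϖ n)..s, max (β n w) (g w)

lemma II_of_meas_bdd {f : ℝ → ℝ} {α γ K : ℝ}
    (hm : AEStronglyMeasurable f (volume.restrict (Set.uIoc α γ)))
    (hb : ∀ᵐ t ∂(volume.restrict (Set.uIoc α γ)), |f t| ≤ K) :
    IntervalIntegrable f volume α γ := by
  apply IntervalIntegrable.mono_fun'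
    (intervalIntegrable_const : IntervalIntegrable (fun _ => K) volume α γ) hm
  filter_upwards [hb] with t ht
  simpa [Real.norm_eq_abs] using ht

section Beta
variable {g : ℝ → ℝ} {β : ℕ → ℝ → ℝ} {ϖ : ℕ → ℝ} {K : ℝ} {n : ℕ}

lemma glueIic {f : ℝ → ℝ} {c : ℝ} (hc : c ≤ 0) (hl : ∀ t ≤ c, f t = 1)
    (hcont : ContinuousOn f (Icc c 0)) : ContinuousOn f (Iic 0) := by
  have hsub : Iic (0:ℝ) ⊆ Iic c ∪ Icc c 0 := by
    intro t ht
    rcases le_or_gt t c with h | h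
    · exact Or.inl h
    · exact Or.inr ⟨h.le, ht⟩
  intro t ht
  apply ContinuousWithinAt.mono _ hsub
  rcases lt_or_ge t c with h | h
  · -- t < c : locally constant
    apply ContinuousWithinAt.union
    · have heq : f =ᶠ[nhds t] fun _ => 1 := by
        filter_upwards [Iio_mem_nhds h] with s hs
        exact hl s hs.le
      exact (continuousAt_const.congr heq.symm).continuousWithinAt
    · apply continuousWithinAt_of_notMem_closure
      rw [closure_Icc]  -- may need c ≤ 0 nonempty; fine
      rintro ⟨h1, _⟩
      exact absurd h1 (not_le.2 h)
  · apply ContinuousWithinAt.union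
    · by_cases h' : t = c
      · subst h'
        apply ContinuousWithinAt.congr
          (continuousWithinAt_const : ContinuousWithinAt (fun _ => (1:ℝ)) (Iic t) t)
        · exact fun s hs => hl s hs
        · exact hl t le_rfl
      · apply continuousWithinAt_of_notMem_closure
        rw [closure_Iic]
        exact not_le.2 (lt_of_le_of_ne h (Ne.symm h'))
    · exact hcont t ⟨h, ht⟩

variable (hβ : IsBetaSeq g β ϖ) (hgm : Measurable g) (hg0 : ∀ u, 0 ≤ g u) (hgK : ∀ u, g u ≤ K)
  (hbc : ContinuousOn (β n) (Iic 0)) (hb01 : ∀ t, t ≤ 0 → 0 ≤ β n t ∧ β n t ≤ 1)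
  (hbpos : ∀ t, t < 0 → 0 < β n t)

include hgm hg0 hgK hbc hb01 in
lemma Gint : ∀ α γ : ℝ, α ≤ γ → γ ≤ 0 →
    IntervalIntegrable (fun u => max (β n u) (g u)) volume α γ := by
  intro α γ hαγ hγ
  have hI : Set.uIoc α γ ⊆ Iic (0:ℝ) := by
    rw [uIoc_of_le hαγ]
    exact fun t ht => ht.2.trans hγ
  apply II_of_meas_bdd (K := max 1 K)
  · apply AEMeasurable.aestronglyMeasurable
    apply AEMeasurable.max
    · have : AEStronglyMeasurable (β n) (volume.restrict (Iic 0)) :=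
        hbc.aestronglyMeasurable measurableSet_Iic
      exact (this.mono_measure (Measure.restrict_mono hI le_rfl)).aemeasurable
    · exact hgm.aemeasurable
  · rw [uIoc_of_le hαγ]
    filter_upwards [ae_restrict_mem measurableSet_Ioc] with t ht
    have ht0 : t ≤ 0 := ht.2.trans hγ
    have h1 := hb01 t ht0
    have h2 := hg0 t
    have h3 := hgK t
    rw [abs_of_nonneg (le_trans h1.1 (le_max_left _ _))]
    exact max_le_max h1.2 h3

include hβ hgm hg0 hgK hbc hb01 in
lemma H_contOn : ContinuousOn (Hn g β ϖ n) (Icc (-ϖ n) 0) := by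
  have hϖ : 0 < ϖ n := (hβ.2 n).1.1
  have h := continuousOn_primitive_interval'
    (Gint hgm hg0 hgK hbc hb01 (-ϖ n) 0 (by linarith) le_rfl)
    (left_mem_uIcc (a := -ϖ n) (b := 0))
  rw [uIcc_of_le (by linarith : -ϖ n ≤ (0:ℝ))] at h
  exact h

include hβ hgm hg0 hgK hbc hb01 in
lemma H_int : ∀ α γ : ℝ, -ϖ n ≤ α → -ϖ n ≤ γ → α ≤ 0 → γ ≤ 0 →
    IntervalIntegrable (Hn g β ϖ n) volume α γ := by
  intro α γ h1 h2 h3 h4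
  apply ContinuousOn.intervalIntegrable
  apply (H_contOn hβ hgm hg0 hgK hbc hb01).mono
  exact Set.uIcc_subset_Icc ⟨h1, h3⟩ ⟨h2, h4⟩

include hgm hg0 hgK hbc hb01 in
lemma H_nonneg : ∀ s, -ϖ n ≤ s → s ≤ 0 → 0 ≤ Hn g β ϖ n s := by
  intro s h1 h2
  apply integral_nonneg h1
  intro u hu
  exact le_trans (hb01 u (hu.2.trans h2)).1 (le_max_left _ _)

include hgm hg0 hgK hbc hb01 in
lemma H_mono : ∀ s t, -ϖ n ≤ s → s ≤ t → t ≤ 0 → Hn g β ϖ n s ≤ Hn g β ϖ n t := by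
  intro s t h1 h2 h3
  have hadd : Hn g β ϖ n t = Hn g β ϖ n s + ∫ w in s..t, max (β n w) (g w) := by
    rw [Hn, Hn]
    exact (integral_add_adjacent_intervals
      (Gint hgm hg0 hgK hbc hb01 _ _ h1 (h2.trans h3))
      (Gint hgm hg0 hgK hbc hb01 _ _ h2 h3)).symm
  rw [hadd]
  have : 0 ≤ ∫ w in s..t, max (β n w) (g w) := by
    apply integral_nonneg h2
    intro u hu
    exact le_trans (hb01 u (hu.2.trans h3)).1 (le_max_left _ _)
  linarith

include hgm hg0 hgK hbc hb01 hbpos in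
lemma H_pos : ∀ s, -ϖ n < s → s ≤ 0 → 0 < Hn g β ϖ n s := by
  intro s h1 h2
  apply intervalIntegral_pos_of_pos_on (Gint hgm hg0 hgK hbc hb01 _ _ h1.le h2)
  · intro u hu
    exact lt_of_lt_of_le (hbpos u (hu.2.trans_le h2)) (le_max_left _ _)
  · exact h1

include hβ hgm hg0 hgK hbc hb01 in
lemma H_total : ∫ s in (-ϖ n)..0, Hn g β ϖ n s = 1 := (hβ.2 n).1.2

include hβ hgm hg0 hgK hbc hb01 in
lemma beta_succ_eq : ∀ t, -ϖ n ≤ t → t ≤ 0 → β (n+1) t = ∫ s in t..0, Hn g β ϖ n s := by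
  intro t h1 h2
  have hf := (hβ.2 n).2.2 t h1 h2
  have hsplit : (∫ s in (-ϖ n)..t, Hn g β ϖ n s) + ∫ s in t..0, Hn g β ϖ n s
      = ∫ s in (-ϖ n)..0, Hn g β ϖ n s :=
    integral_add_adjacent_intervals
      (H_int hβ hgm hg0 hgK hbc hb01 _ _ (by linarith [(hβ.2 n).1.1]) h1 (by linarith) h2)
      (H_int hβ hgm hg0 hgK hbc hb01 _ _ h1 (by linarith [(hβ.2 n).1.1]) h2 le_rfl)
  rw [H_total hβ hgm hg0 hgK hbc hb01] at hsplit
  rw [hf]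
  show 1 - ∫ s in (-ϖ n)..t, Hn g β ϖ n s = _
  linarith

include hβ hgm hg0 hgK in
lemma beta_pack : ∀ m, ContinuousOn (β m) (Iic 0) ∧ (∀ t, t ≤ 0 → 0 ≤ β m t ∧ β m t ≤ 1)
    ∧ (∀ s t : ℝ, s ≤ t → t ≤ 0 → β m t ≤ β m s) ∧ (∀ t, t < 0 → 0 < β m t) := by
  intro m
  induction m with
  | zero =>
    refine ⟨continuousOn_const.congr (fun t ht => hβ.1 t ht), ?_, ?_, ?_⟩
    · intro t ht; rw [hβ.1 t ht]; norm_num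
    · intro s t hst ht; rw [hβ.1 t ht, hβ.1 s (hst.trans ht)]
    · intro t ht; rw [hβ.1 t ht.le]; norm_num
  | succ n ih =>
    obtain ⟨hbc, hb01, _, hbpos⟩ := ih
    have hϖ : 0 < ϖ n := (hβ.2 n).1.1
    have hϖ0 : -ϖ n ≤ 0 := by linarith
    have hlft := (hβ.2 n).2.1
    have heq := beta_succ_eq hβ hgm hg0 hgK hbc hb01
    have hHnn := H_nonneg hgm hg0 hgK hbc hb01 (β := β) (ϖ := ϖ)
    have hHint := H_int hβ hgm hg0 hgK hbc hb01
    have hHmono := H_mono hgm hg0 hgK hbc hb01 (β := β) (ϖ := ϖ)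
    have hHpos := H_pos hgm hg0 hgK hbc hb01 hbpos (β := β) (ϖ := ϖ)
    -- splitting fact : for -ϖ n ≤ s ≤ t ≤ 0,  ∫_s^0 = ∫_s^t + ∫_t^0
    have hsplit : ∀ s t : ℝ, -ϖ n ≤ s → s ≤ t → t ≤ 0 →
        (∫ u in s..(0:ℝ), Hn g β ϖ n u)
          = (∫ u in s..t, Hn g β ϖ n u) + ∫ u in t..(0:ℝ), Hn g β ϖ n u := by
      intro s t h1 h2 h3
      exact (integral_add_adjacent_intervals
        (hHint s t h1 (h1.trans h2) (h2.trans h3) h3)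
        (hHint t 0 (h1.trans h2) hϖ0 h3 le_rfl)).symm
    have hpiece_nonneg : ∀ s t : ℝ, -ϖ n ≤ s → s ≤ t → t ≤ 0 →
        0 ≤ ∫ u in s..t, Hn g β ϖ n u := by
      intro s t h1 h2 h3
      apply integral_nonneg h2
      intro u hu
      exact hHnn u (h1.trans hu.1) (hu.2.trans h3)
    refine ⟨?_, ?_, ?_, ?_⟩
    · -- continuity
      apply glueIic hϖ0 hlft
      have hJ : ContinuousOn (fun t => ∫ s in t..(0:ℝ), Hn g β ϖ n s) (Icc (-ϖ n) 0) := by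
        have hIO : IntegrableOn (Hn g β ϖ n) (uIcc (-ϖ n) 0) volume := by
          rw [uIcc_of_le hϖ0]
          exact (H_contOn hβ hgm hg0 hgK hbc hb01).integrableOn_Icc
        have := continuousOn_primitive_interval_left hIO
        rwa [uIcc_of_le hϖ0] at this
      exact hJ.congr (fun t ht => heq t ht.1 ht.2)
    · -- bounds
      intro t ht
      rcases le_or_gt t (-ϖ n) with h | h
      · rw [hlft t h]; norm_num
      · rw [heq t h.le ht]
        constructor
        · exact hpiece_nonneg t 0 h.le ht le_rfl |>.trans_eq (by norm_num) |> (fun h => h)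
        · have h1 := hsplit (-ϖ n) t le_rfl h.le ht
          have h2 := hpiece_nonneg (-ϖ n) t le_rfl h.le ht
          have h3 := H_total hβ hgm hg0 hgK hbc hb01 (n := n)
          rw [show (∫ s in (-ϖ n)..(0:ℝ), Hn g β ϖ n s) = 1 from h3] at h1
          linarith
    · -- antitone
      intro s t hst ht
      rcases le_or_gt t (-ϖ n) with h | h
      · rw [hlft t h, hlft s (hst.trans h)]
      · rcases le_or_gt s (-ϖ n) with hs | hs
        · rw [hlft s hs]
          -- β (n+1) t ≤ 1
          rw [heq t h.le ht]
          have h1 := hsplit (-ϖ n) t le_rfl h.le ht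
          have h2 := hpiece_nonneg (-ϖ n) t le_rfl h.le ht
          have h3 := H_total hβ hgm hg0 hgK hbc hb01 (n := n)
          rw [show (∫ s in (-ϖ n)..(0:ℝ), Hn g β ϖ n s) = 1 from h3] at h1
          linarith
        · rw [heq t h.le ht, heq s hs.le (hst.trans ht)]
          have h1 := hsplit s t hs.le hst ht
          have h2 := hpiece_nonneg s t hs.le hst ht
          linarith
    · -- positivity
      intro t ht
      rcases le_or_gt t (-ϖ n) with h | h
      · rw [hlft t h]; norm_num
      · rw [heq t h.le ht.le]
        have hth : t < t/2 := by linarith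
        have hth0 : t/2 ≤ 0 := by linarith
        have h1 := hsplit t (t/2) h.le hth.le hth0
        have h2 := hpiece_nonneg t (t/2) h.le hth.le hth0
        have h4 : 0 < Hn g β ϖ n (t/2) := hHpos (t/2) (by linarith) hth0
        have h5 : (∫ u in (t/2)..(0:ℝ), (fun _ => Hn g β ϖ n (t/2)) u)
            ≤ ∫ u in (t/2)..(0:ℝ), Hn g β ϖ n u := by
          apply integral_mono_on hth0 intervalIntegrable_const
            (hHint (t/2) 0 (by linarith) hϖ0 hth0 le_rfl)
          intro u hu
          exact hHmono (t/2) u (by linarith) hu.1 hu.2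
        rw [intervalIntegral.integral_const, smul_eq_mul] at h5
        nlinarith
end Beta

lemma r_deriv_rep (hr : IsDelayCosine Δ r) {α γ : ℝ} (hα : 0 ≤ α) (hγ : 0 ≤ γ) :
    deriv r γ = deriv r α - ∫ u in α..γ, r (u - Δ) := by
  rw [hr.2.2 γ hγ, hr.2.2 α hα]
  have := integral_interval_sub_left (r_shift_intable hr Δ 0 γ) (r_shift_intable hr Δ 0 α)
  linarith [this]

section Core
variable {ρ a μ sm : ℝ} {y Fy : ℝ → ℝ}

lemma st13_core
    (hΔ : 0 ≤ Δ) (hr : IsDelayCosine Δ r) (hθ : IsFirstZero r θ) (hρ : 0 < ρ)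
    (hyd : ∀ t, HasDerivAt y (deriv y t) t)
    (hyrep : ∀ t₀ t : ℝ, deriv y t = deriv y t₀ - ∫ u in t₀..t, Fy u)
    (hFyint : ∀ α γ : ℝ, IntervalIntegrable Fy volume α γ)
    (hFyb : ∀ᵐ u ∂(volume : Measure ℝ),
      u ∈ Icc (a - θ) a → |Fy u| ≤ ρ * r (θ - (a - u) - Δ) + μ)
    (hya : y a = 0) (hyθ : y (a - θ) ≤ ρ)
    (hmax : ∀ s ∈ Icc (0:ℝ) θ, y (a - s) - ρ * r (θ - s) ≤ μ)
    (heq : y (a - sm) - ρ * r (θ - sm) = μ)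
    (hs : sm ∈ Ioo (0:ℝ) θ) (hμ : 0 < μ) : False := by
  set D : ℝ → ℝ := fun s => y (a - s) - ρ * r (θ - s) with hD
  set D' : ℝ → ℝ := fun s => ρ * deriv r (θ - s) - deriv y (a - s) with hD'
  have hy'cont : Continuous (deriv y) := by
    have : Continuous fun t => deriv y 0 - ∫ u in (0:ℝ)..t, Fy u :=
      continuous_const.sub (intervalIntegral.continuous_primitive hFyint 0)
    exact this.congr (fun t => (hyrep 0 t).symm)
  have hDder : ∀ s : ℝ, s ≤ θ → HasDerivAt D (D' s) s := by
    intro s hsθ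
    have h1 : HasDerivAt (fun u : ℝ => y (a - u)) (deriv y (a - s) * (-1)) s :=
      (hyd (a - s)).comp s ((hasDerivAt_id s).const_sub a)
    have h2 : HasDerivAt (fun u : ℝ => r (θ - u)) (deriv r (θ - s) * (-1)) s :=
      (hr.2.1 (θ - s) (by linarith)).comp s ((hasDerivAt_id s).const_sub θ)
    have := h1.sub ((h2.const_mul ρ))
    refine HasDerivAt.congr_deriv this ?_
    show _ = ρ * deriv r (θ - s) - deriv y (a - s)
    ring
  -- critical point
  have hD'sm : D' sm = 0 := by
    have hloc : IsLocalMax D sm := by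
      filter_upwards [Icc_mem_nhds hs.1 hs.2] with s hsI
      calc D s ≤ μ := hmax s hsI
        _ = D sm := heq.symm
    exact hloc.hasDerivAt_eq_zero (hDder sm hs.2.le)
  -- B integral identity
  have hBid : ∀ s1 s2 : ℝ, (∫ u in (a - s1)..(a - s2), (ρ * r (θ - (a - u) - Δ) + μ))
      = ρ * (∫ u in (θ - s1)..(θ - s2), r (u - Δ)) + μ * (s1 - s2) := by
    intro s1 s2
    have hcont : Continuous fun u => ρ * r (θ - (a - u) - Δ) := by
      have := r_cont hr; fun_prop
    rw [intervalIntegral.integral_add (hcont.intervalIntegrable _ _) intervalIntegrable_const]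
    rw [intervalIntegral.integral_const, smul_eq_mul]
    have harg : (fun u => ρ * r (θ - (a - u) - Δ)) = fun u => ρ * r ((θ - a - Δ) + u) := by
      funext u; ring_nf
    rw [harg, intervalIntegral.integral_const_mul, intervalIntegral.integral_comp_add_left]
    have h2 : ∫ u in (θ - s1)..(θ - s2), r (u - Δ)
        = ∫ u in (θ - s1 - Δ)..(θ - s2 - Δ), r u := integral_comp_sub_right r Δ
    rw [h2]
    have e1 : θ - a - Δ + (a - s1) = θ - s1 - Δ := by ring
    have e2 : θ - a - Δ + (a - s2) = θ - s2 - Δ := by ring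
    rw [e1, e2]
    ring
  -- general D' formula
  have hD'eq : ∀ s : ℝ, s ≤ θ → D' s
      = ρ * (∫ u in (θ - s)..(θ - sm), r (u - Δ)) - ∫ u in (a - s)..(a - sm), Fy u := by
    intro s hsθ
    have h1 : deriv y (a - s) - deriv y (a - sm) = ∫ u in (a - s)..(a - sm), Fy u := by
      rw [hyrep (a - sm) (a - s)]
      rw [integral_symm]
      ring
    have h2 : deriv r (θ - s) - deriv r (θ - sm)
        = ∫ u in (θ - s)..(θ - sm), r (u - Δ) := by
      rw [r_deriv_rep hr (by linarith [hs.2] : (0:ℝ) ≤ θ - sm) (by linarith : (0:ℝ) ≤ θ - s)]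
      rw [integral_symm]
      ring
    have h2' : ρ * deriv r (θ - s) - ρ * deriv r (θ - sm)
        = ρ * ∫ u in (θ - s)..(θ - sm), r (u - Δ) := by rw [← mul_sub, h2]
    have h0 : D' s = D' s - D' sm := by rw [hD'sm]; ring
    rw [h0]
    simp only [hD']
    linarith [h1, h2']
  have hs2 : (Real.sqrt 2)^2 = 2 := Real.sq_sqrt (by norm_num)
  have hs2p : 0 < Real.sqrt 2 := Real.sqrt_pos.2 (by norm_num)
  set B : ℝ → ℝ := fun u => ρ * r (θ - (a - u) - Δ) + μ with hB
  have hBcont : Continuous B := by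
    have := r_cont hr
    simp only [hB]
    fun_prop
  have hFy_le : ∀ α γ : ℝ, a - θ ≤ α → α ≤ γ → γ ≤ a →
      (∫ u in α..γ, Fy u) ≤ (∫ u in α..γ, B u) ∧
      -(∫ u in α..γ, B u) ≤ ∫ u in α..γ, Fy u := by
    intro α γ h1 h2 h3
    have hres : ∀ᵐ u ∂(volume.restrict (Icc α γ)),
        u ∈ Icc (a - θ) a → |Fy u| ≤ ρ * r (θ - (a - u) - Δ) + μ :=
      Filter.Eventually.filter_mono (ae_mono Measure.restrict_le_self) hFyb
    constructor
    · apply integral_mono_ae_restrict h2 (hFyint _ _) (hBcont.intervalIntegrable _ _)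
      filter_upwards [hres, ae_restrict_mem measurableSet_Icc] with u h hu
      have hu' : u ∈ Icc (a - θ) a := ⟨h1.trans hu.1, hu.2.trans h3⟩
      have := h hu'
      calc Fy u ≤ |Fy u| := le_abs_self _
        _ ≤ B u := this
    · have : (∫ u in α..γ, -B u) ≤ ∫ u in α..γ, Fy u := by
        apply integral_mono_ae_restrict h2 ((hBcont.neg).intervalIntegrable _ _) (hFyint _ _)
        filter_upwards [hres, ae_restrict_mem measurableSet_Icc] with u h hu
        have hu' : u ∈ Icc (a - θ) a := ⟨h1.trans hu.1, hu.2.trans h3⟩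
        have := h hu'
        calc -B u ≤ -|Fy u| := by simp only [hB]; linarith
          _ ≤ Fy u := neg_abs_le _
      rwa [intervalIntegral.integral_neg] at this
  -- forward bound
  have hfor : ∀ s ∈ Icc sm θ, -μ * (s - sm) ≤ D' s := by
    intro s hsI
    rw [hD'eq s hsI.2]
    have h4 := (hFy_le (a - s) (a - sm) (by linarith [hsI.2]) (by linarith [hsI.1])
      (by linarith [hs.1])).1
    rw [show (∫ u in (a-s)..(a-sm), B u)
      = ρ * (∫ u in (θ - s)..(θ - sm), r (u - Δ)) + μ * (s - sm) from hBid s sm] at h4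
    linarith
  -- backward bound
  have hback : ∀ s ∈ Icc (0:ℝ) sm, D' s ≤ μ * (sm - s) := by
    intro s hsI
    rw [hD'eq s (by linarith [hsI.2, hs.2])]
    have h4 := (hFy_le (a - sm) (a - s) (by linarith [hs.2]) (by linarith [hsI.2])
      (by linarith [hsI.1])).1
    rw [show (∫ u in (a-sm)..(a-s), B u)
      = ρ * (∫ u in (θ - sm)..(θ - s), r (u - Δ)) + μ * (sm - s) from hBid sm s] at h4
    have e1 : (∫ u in (a-s)..(a-sm), Fy u) = -∫ u in (a-sm)..(a-s), Fy u :=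
      integral_symm _ _
    have e2 : (∫ u in (θ-s)..(θ-sm), r (u - Δ)) = -∫ u in (θ-sm)..(θ-s), r (u - Δ) :=
      integral_symm _ _
    rw [e1, e2]
    linarith [h4]
  -- continuity of D'
  have hD'contOn : ContinuousOn D' (Icc 0 θ) := by
    have hc1 : ContinuousOn (fun s => deriv r (θ - s)) (Icc 0 θ) := by
      apply (r_deriv_contOn hr).comp (by fun_prop : Continuous fun s : ℝ => θ - s).continuousOn
      intro u hu
      simp only [mem_Ici]
      linarith [hu.2]
    have hc2 : ContinuousOn (fun s => deriv y (a - s)) (Icc 0 θ) :=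
      (hy'cont.comp (by fun_prop : Continuous fun s : ℝ => a - s)).continuousOn
    exact (continuousOn_const.mul hc1).sub hc2
  -- FTC forward
  have hftcf : D θ - D sm = ∫ s in sm..θ, D' s := by
    symm
    apply integral_eq_sub_of_hasDerivAt
    · intro u hu
      rw [uIcc_of_le hs.2.le] at hu
      exact hDder u hu.2
    · apply ContinuousOn.intervalIntegrable
      apply hD'contOn.mono
      rw [uIcc_of_le hs.2.le]
      exact Icc_subset_Icc hs.1.le le_rfl
  have hlowf : ∫ s in sm..θ, (-μ * (s - sm)) ≤ ∫ s in sm..θ, D' s := by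
    apply integral_mono_on hs.2.le (by apply ContinuousOn.intervalIntegrable; fun_prop)
    · apply ContinuousOn.intervalIntegrable
      apply hD'contOn.mono
      rw [uIcc_of_le hs.2.le]
      exact Icc_subset_Icc hs.1.le le_rfl
    · exact hfor
  have hvalf : ∫ s in sm..θ, (-μ * (s - sm)) = -μ * ((θ - sm)^2/2) := by
    rw [intervalIntegral.integral_const_mul]
    have h5 : (∫ s in sm..θ, (s - sm)) = ∫ s in (sm - sm)..(θ - sm), s :=
      integral_comp_sub_right (fun x => x) sm
    rw [h5, sub_self, integral_id]
    ring
  have hDθ : D θ ≤ 0 := by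
    simp only [hD, sub_self, hr.1 0 le_rfl]
    linarith
  have hDsm : D sm = μ := heq
  have hsqf : 2 ≤ (θ - sm)^2 := by nlinarith
  -- FTC backward
  have hftcb : D sm - D 0 = ∫ s in (0:ℝ)..sm, D' s := by
    symm
    apply integral_eq_sub_of_hasDerivAt
    · intro u hu
      rw [uIcc_of_le hs.1.le] at hu
      exact hDder u (by linarith [hu.2, hs.2])
    · apply ContinuousOn.intervalIntegrable
      apply hD'contOn.mono
      rw [uIcc_of_le hs.1.le]
      exact Icc_subset_Icc le_rfl hs.2.le
  have hlowb : ∫ s in (0:ℝ)..sm, D' s ≤ ∫ s in (0:ℝ)..sm, (μ * (sm - s)) := by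
    apply integral_mono_on hs.1.le
    · apply ContinuousOn.intervalIntegrable
      apply hD'contOn.mono
      rw [uIcc_of_le hs.1.le]
      exact Icc_subset_Icc le_rfl hs.2.le
    · apply ContinuousOn.intervalIntegrable; fun_prop
    · exact hback
  have hvalb : ∫ s in (0:ℝ)..sm, (μ * (sm - s)) = μ * (sm^2/2) := by
    rw [intervalIntegral.integral_const_mul]
    have h5 : (∫ s in (0:ℝ)..sm, (sm - s)) = ∫ s in (sm - sm)..(sm - 0), s :=
      integral_comp_sub_left (fun x => x) sm
    rw [h5, sub_self, sub_zero, integral_id]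
    ring
  have hD0 : D 0 = 0 := by
    simp only [hD, sub_zero, hθ.2.1, hya]
    ring
  have hsqb : 2 ≤ sm^2 := by nlinarith
  -- conclude
  have h1 : Real.sqrt 2 ≤ θ - sm := by
    have := Real.sqrt_le_sqrt hsqf
    rwa [Real.sqrt_sq (by linarith [hs.2])] at this
  have h2 : Real.sqrt 2 ≤ sm := by
    have := Real.sqrt_le_sqrt hsqb
    rwa [Real.sqrt_sq hs.1.le] at this
  have h3 := theta_le hΔ hr hθ
  nlinarith [hs2p]

lemma st13
    (hΔ : 0 ≤ Δ) (hr : IsDelayCosine Δ r) (hθ : IsFirstZero r θ) (hρpos : 0 < ρ)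
    {p τ x : ℝ → ℝ}
    (hxd : ∀ t, HasDerivAt x (deriv x t) t)
    (hxrep : ∀ t₀ t : ℝ, deriv x t = deriv x t₀ - ∫ u in t₀..t, p u * x (u - τ u))
    (hFint : ∀ α γ : ℝ, IntervalIntegrable (fun u => p u * x (u - τ u)) volume α γ)
    (haep : ∀ᵐ u ∂(volume : Measure ℝ), |p u| ≤ 1)
    (haeτ : ∀ᵐ u ∂(volume : Measure ℝ), τ u ≤ Δ) (hτ0 : ∀ t, 0 ≤ τ t)
    (hxa : x a = 0) (hbound : ∀ t ∈ Icc (a - Δ - θ) a, |x t| ≤ ρ) :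
    ∀ v, 0 ≤ v → v ≤ Δ → |x (a - v)| ≤ ρ * r (θ - v) := by
  have hrnn : ∀ t ≤ θ, 0 ≤ r t := r_nonneg hr hθ
  have hclaim : ∀ s ∈ Icc (0:ℝ) θ, |x (a - s)| ≤ ρ * r (θ - s) := by
    by_contra hcon
    push_neg at hcon
    obtain ⟨s₀, hs₀I, hs₀⟩ := hcon
    set φ : ℝ → ℝ := fun s => |x (a - s)| - ρ * r (θ - s) with hφ
    have hφcont : ContinuousOn φ (Icc 0 θ) := by
      have hxc : Continuous x := by
        rw [continuous_iff_continuousAt]; exact fun t => (hxd t).continuousAt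
      have hrc := r_cont hr
      fun_prop
    obtain ⟨sm, hsmI, hsmax'⟩ := isCompact_Icc.exists_isMaxOn
      (nonempty_Icc.2 hθ.1.le) hφcont
    have hsmax : ∀ s ∈ Icc (0:ℝ) θ, φ s ≤ φ sm := hsmax'
    set μ := φ sm with hμdef
    have hφs₀ : 0 < φ s₀ := by simp only [hφ]; linarith
    have hμ : 0 < μ := lt_of_lt_of_le hφs₀ (hsmax s₀ hs₀I)
    have hφ0 : φ 0 = 0 := by
      simp only [hφ, sub_zero, hθ.2.1, hxa]
      simp
    have hφθ : φ θ ≤ 0 := by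
      simp only [hφ, sub_self, hr.1 0 le_rfl]
      have := hbound (a - θ) ⟨by linarith, by linarith [hθ.1]⟩
      linarith
    have hsm0 : 0 < sm := by
      rcases eq_or_lt_of_le hsmI.1 with h | h
      · exfalso
        have : μ = φ 0 := by rw [hμdef, ← h]
        rw [this, hφ0] at hμ; exact lt_irrefl _ hμ
      · exact h
    have hsmθ : sm < θ := by
      rcases eq_or_lt_of_le hsmI.2 with h | h
      · exfalso
        have : μ = φ θ := by rw [hμdef, h]
        linarith
      · exact h
    have hxsm : |x (a - sm)| = ρ * r (θ - sm) + μ := by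
      simp only [hμdef, hφ]; ring
    have hxsm0 : 0 < |x (a - sm)| := by
      rw [hxsm]
      have := hrnn (θ - sm) (by linarith)
      nlinarith
    -- window bound for F, in terms of |x|
    have habs : ∀ s ∈ Icc (0:ℝ) (θ + Δ), |x (a - s)| ≤ ρ * r (θ - s) + μ := by
      intro s hsI2
      rcases le_or_gt s θ with h | h
      · have := hsmax s ⟨hsI2.1, h⟩
        simp only [hφ] at this
        linarith
      · rw [hr.1 (θ - s) (by linarith)]
        have := hbound (a - s) ⟨by linarith [hsI2.2], by linarith [hsI2.1]⟩
        linarith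
    have hFb : ∀ᵐ u ∂(volume : Measure ℝ), u ∈ Icc (a - θ) a →
        |p u * x (u - τ u)| ≤ ρ * r (θ - (a - u) - Δ) + μ := by
      filter_upwards [haep, haeτ] with u hp hτ hu
      have h1 : |p u * x (u - τ u)| ≤ |x (u - τ u)| := by
        rw [abs_mul]
        nlinarith [abs_nonneg (x (u - τ u)), abs_nonneg (p u)]
      set s' := a - (u - τ u) with hs'
      have hs'0 : 0 ≤ s' := by simp only [hs']; linarith [hτ0 u, hu.2]
      have hs'ub : s' ≤ (a - u) + Δ := by simp only [hs']; linarith [hτ]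
      have hs'θΔ : s' ≤ θ + Δ := by simp only [hs']; linarith [hu.1, hτ]
      have h2 : |x (a - s')| ≤ ρ * r (θ - s') + μ := habs s' ⟨hs'0, hs'θΔ⟩
      have h3 : r (θ - s') ≤ r (θ - (a - u) - Δ) :=
        r_anti hΔ hr hθ _ _ (by linarith) (by linarith)
      have he : a - s' = u - τ u := by simp only [hs']; ring
      rw [he] at h2
      nlinarith [hρpos]
    -- sign cases
    rcases lt_or_gt_of_ne (fun h0 => by rw [h0] at hxsm0; simp at hxsm0 : x (a - sm) ≠ 0)
      with hneg | hpos
    · -- x (a - sm) < 0 : use y = -x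
      apply st13_core hΔ hr hθ hρpos (y := fun t => -x t)
        (Fy := fun u => p u * (-x (u - τ u))) (a := a) (sm := sm) (μ := μ)
      · intro t
        have h := (hxd t).neg
        have : deriv (fun t => -x t) t = -deriv x t := deriv.fun_neg
        rw [this]; exact h
      · intro t₀ t
        have e1 : deriv (fun s => -x s) t = -deriv x t := deriv.fun_neg
        have e2 : deriv (fun s => -x s) t₀ = -deriv x t₀ := deriv.fun_neg
        have e3 : (∫ u in t₀..t, p u * -x (u - τ u))
            = -∫ u in t₀..t, p u * x (u - τ u) := by
          rw [← intervalIntegral.integral_neg]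
          congr 1; funext u; ring
        rw [e1, e2, e3, hxrep t₀ t]; ring
      · intro α γ
        have h' := (hFint α γ).neg
        convert h' using 1
        funext u
        simp only [Pi.neg_apply]
        ring
      · filter_upwards [hFb] with u h hu
        have e : |p u * -x (u - τ u)| = |p u * x (u - τ u)| := by
          rw [show p u * -x (u - τ u) = -(p u * x (u - τ u)) from by ring, abs_neg]
        rw [e]; exact h hu
      · simp [hxa]
      · have := hbound (a - θ) ⟨by linarith, by linarith [hθ.1]⟩
        have := neg_abs_le (x (a - θ))
        linarith [abs_nonneg (x (a - θ))]
      · intro s hsI2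
        have := hsmax s hsI2
        simp only [hφ] at this
        have := neg_abs_le (x (a - s))
        simp only [hμdef]
        linarith
      · show -x (a - sm) - ρ * r (θ - sm) = μ
        have := abs_of_neg hneg
        linarith [hxsm]
      · exact ⟨hsm0, hsmθ⟩
      · exact hμ
    · -- x (a - sm) > 0 : use y = x
      apply st13_core hΔ hr hθ hρpos (y := x)
        (Fy := fun u => p u * x (u - τ u)) (a := a) (sm := sm) (μ := μ)
      · exact hxd
      · exact hxrep
      · exact hFint
      · exact hFb
      · exact hxa
      · have := hbound (a - θ) ⟨by linarith, by linarith [hθ.1]⟩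
        linarith [le_abs_self (x (a - θ))]
      · intro s hsI2
        have := hsmax s hsI2
        simp only [hφ] at this
        linarith [le_abs_self (x (a - s))]
      · have := abs_of_pos hpos
        linarith [hxsm]
      · exact ⟨hsm0, hsmθ⟩
      · exact hμ
  intro v hv0 hvΔ
  rcases le_or_gt v θ with h | h
  · exact hclaim v ⟨hv0, h⟩
  · rw [hr.1 (θ - v) (by linarith)]
    have := hbound (a - v) ⟨by linarith [hθ.1], by linarith⟩
    linarith

end Core

variable {ρ M a : ℝ}
set_option maxHeartbeats 1000000 in
lemma main_pos
    (hΔ : 0 ≤ Δ) (hr : IsDelayCosine Δ r) (hθ : IsFirstZero r θ)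
    (hρpos : 0 < ρ) (hMpos : 0 < M)
    {p τ x : ℝ → ℝ}
    (hxd : ∀ t, HasDerivAt x (deriv x t) t)
    (hxrep : ∀ t₀ t : ℝ, deriv x t = deriv x t₀ - ∫ u in t₀..t, p u * x (u - τ u))
    (hFint : ∀ α γ : ℝ, IntervalIntegrable (fun u => p u * x (u - τ u)) volume α γ)
    (haep : ∀ᵐ u ∂(volume : Measure ℝ), |p u| ≤ 1)
    (haeτ : ∀ᵐ u ∂(volume : Measure ℝ), τ u ≤ Δ)
    (hτ0 : ∀ t, 0 ≤ τ t)
    {b w : ℝ} (hw : w ∈ Ioo a b) (hxa : x a = 0)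
    (hxpos : ∀ t ∈ Icc a b, 0 ≤ x t) (hxleM : ∀ t ∈ Icc a b, x t ≤ M)
    (hxw : x w = M) (hx'w : deriv x w = 0)
    (hρbound : ∀ t ∈ Icc (a - Δ - θ) a, |x t| ≤ ρ)
    {g : ℝ → ℝ} (hgm : Measurable g) (hg0 : ∀ u, 0 ≤ g u) (hgK : ∀ u, g u ≤ ρ / M)
    (hgval : ∀ s, 0 ≤ s → s ≤ Δ → M * g (-s) = ρ * r (θ + s - Δ))
    {β : ℕ → ℝ → ℝ} {ϖ : ℕ → ℝ} (hβ : IsBetaSeq g β ϖ) :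
    ∀ n, ϖ n ≤ w - a := by
  set c := w - a with hcdef
  have hc : 0 < c := by simp only [hcdef]; linarith [hw.1]
  have hcb : a + c ≤ b := by simp only [hcdef]; linarith [hw.2]
  have hwc : w = a + c := by simp only [hcdef]; ring
  have hx'cont : Continuous (deriv x) := by
    have : Continuous fun t => deriv x 0 - ∫ u in (0:ℝ)..t, p u * x (u - τ u) :=
      continuous_const.sub (intervalIntegral.continuous_primitive hFint 0)
    exact this.congr (fun t => (hxrep 0 t).symm)
  have hxftc : ∀ α γ : ℝ, x γ - x α = ∫ t in α..γ, deriv x t := by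
    intro α γ
    symm
    exact integral_eq_sub_of_hasDerivAt (fun t _ => hxd t)
      (hx'cont.intervalIntegrable _ _)
  have hst13 : ∀ v, 0 ≤ v → v ≤ Δ → |x (a - v)| ≤ ρ * r (θ - v) :=
    st13 hΔ hr hθ hρpos hxd hxrep hFint haep haeτ hτ0 hxa hρbound
  have hpack := beta_pack hβ hgm hg0 hgK
  have hmain : ∀ n, (∀ s, 0 ≤ s → s ≤ c → x (a + s) ≤ M * β n (-s)) →
      ϖ n ≤ c ∧ (∀ s, 0 ≤ s → s ≤ c → x (a + s) ≤ M * β (n+1) (-s)) := by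
    intro n hCn
    obtain ⟨hbc, hb01, hbmono, hbpos⟩ := hpack n
    have hϖ : 0 < ϖ n := (hβ.2 n).1.1
    have hGint := Gint hgm hg0 hgK hbc hb01
    have hHnn := H_nonneg (ϖ := ϖ) hgm hg0 hgK hbc hb01
    have hHmono := H_mono (ϖ := ϖ) hgm hg0 hgK hbc hb01
    have hHpos := H_pos (ϖ := ϖ) hgm hg0 hgK hbc hb01 hbpos
    have hHtot := H_total hβ hgm hg0 hgK hbc hb01
    have hbeq := beta_succ_eq hβ hgm hg0 hgK hbc hb01
    have hHcont := H_contOn hβ hgm hg0 hgK hbc hb01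
    set Hf : ℝ → ℝ := Hn g β ϖ n with hHf
    set Gc : ℝ → ℝ := fun u => max (β n (a - u)) (g (a - u)) with hGc
    -- integrability of composed G
    have hGcint : ∀ α γ : ℝ, a ≤ α → α ≤ γ → IntervalIntegrable Gc volume α γ := by
      intro α γ h1 h2
      have h3 := (hGint (a - γ) (a - α) (by linarith) (by linarith)).comp_sub_left a
      have e1 : a - (a - γ) = γ := by ring
      have e2 : a - (a - α) = α := by ring
      rw [e1, e2] at h3
      exact h3.symm
    -- value of ∫ Gc
    have hGcval : ∀ α γ : ℝ, a ≤ α → α ≤ γ → -ϖ n ≤ a - γ →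
        (∫ u in α..γ, Gc u) = Hf (a - α) - Hf (a - γ) := by
      intro α γ h1 h2 h3
      have h4 : (∫ u in α..γ, Gc u) = ∫ u in (a - γ)..(a - α), max (β n u) (g u) :=
        integral_comp_sub_left (fun u => max (β n u) (g u)) a
      have h5 := integral_add_adjacent_intervals
        (hGint (-ϖ n) (a - γ) h3 (by linarith))
        (hGint (a - γ) (a - α) (by linarith) (by linarith))
      have h6 : Hf (a - γ) = ∫ u in (-ϖ n)..(a - γ), max (β n u) (g u) := rfl
      have h7 : Hf (a - α) = ∫ u in (-ϖ n)..(a - α), max (β n u) (g u) := rfl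
      rw [h4, h6, h7]
      linarith [h5]
    -- a.e. window bound
    have hFb : ∀ᵐ u ∂(volume : Measure ℝ), u ∈ Icc a (a + c) →
        |p u * x (u - τ u)| ≤ M * Gc u := by
      filter_upwards [haep, haeτ] with u hp hτu hu
      have h1 : |p u * x (u - τ u)| ≤ |x (u - τ u)| := by
        rw [abs_mul]
        nlinarith [abs_nonneg (x (u - τ u)), abs_nonneg (p u)]
      set s := u - a with hs
      have hs0 : 0 ≤ s := by simp only [hs]; linarith [hu.1]
      have hsc : s ≤ c := by simp only [hs]; linarith [hu.2]
      set v := u - τ u - a with hv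
      have hv1 : s - Δ ≤ v := by simp only [hv, hs]; linarith [hτu]
      have hv2 : v ≤ s := by simp only [hv, hs]; linarith [hτ0 u]
      have hau : a - u = -s := by simp only [hs]; ring
      rcases le_or_gt 0 v with hv0 | hv0
      · -- delayed point in [a, w]
        have hd : u - τ u = a + v := by simp only [hv]; ring
        have hxd1 : |x (u - τ u)| = x (u - τ u) :=
          abs_of_nonneg (hxpos _ ⟨by rw [hd]; linarith, by rw [hd]; linarith⟩)
        have h2 : x (a + v) ≤ M * β n (-v) := hCn v hv0 (by linarith)
        have h3 : β n (-v) ≤ β n (-s) := hbmono (-s) (-v) (by linarith) (by linarith)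
        have h4 : β n (-s) ≤ Gc u := by
          simp only [hGc, hau]
          exact le_max_left _ _
        rw [hxd1] at h1
        rw [hd] at h1 ⊢
        calc |p u * x (a + v)| ≤ x (a + v) := h1
          _ ≤ M * β n (-v) := h2
          _ ≤ M * β n (-s) := by nlinarith
          _ ≤ M * Gc u := by nlinarith
      · -- delayed point left of a
        have hsΔ : s < Δ := by linarith
        have hd : u - τ u = a - (-v) := by simp only [hv]; ring
        have h2 : |x (a - (-v))| ≤ ρ * r (θ - (-v)) :=
          hst13 (-v) (by linarith) (by linarith)
        have h3 : r (θ + v) ≤ r (θ + s - Δ) :=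
          r_anti hΔ hr hθ (θ + s - Δ) (θ + v) (by linarith) (by linarith)
        have h4 : ρ * r (θ + s - Δ) = M * g (-s) := (hgval s hs0 hsΔ.le).symm
        have h5 : g (-s) ≤ Gc u := by
          simp only [hGc, hau]
          exact le_max_right _ _
        have e : θ - (-v) = θ + v := by ring
        rw [hd] at h1 ⊢
        rw [e] at h2
        calc |p u * x (a - -v)| ≤ |x (a - -v)| := h1
          _ ≤ ρ * r (θ + v) := h2
          _ ≤ ρ * r (θ + s - Δ) := by nlinarith
          _ = M * g (-s) := h4
          _ ≤ M * Gc u := by nlinarith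
    -- integral bound for F
    have hIF : ∀ α γ : ℝ, a ≤ α → α ≤ γ → γ ≤ a + c → -ϖ n ≤ a - γ →
        |∫ u in α..γ, p u * x (u - τ u)| ≤ M * (Hf (a - α) - Hf (a - γ)) := by
      intro α γ h1 h2 h3 h4
      have habs := intervalIntegral.abs_integral_le_integral_abs
        (f := fun u => p u * x (u - τ u)) (μ := volume) h2
      have hres : ∀ᵐ u ∂(volume.restrict (Icc α γ)), u ∈ Icc a (a + c) →
          |p u * x (u - τ u)| ≤ M * Gc u :=
        Filter.Eventually.filter_mono (ae_mono Measure.restrict_le_self) hFb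
      have hmono : (∫ u in α..γ, |p u * x (u - τ u)|) ≤ ∫ u in α..γ, M * Gc u := by
        apply integral_mono_ae_restrict h2 (hFint α γ).abs
          ((hGcint α γ h1 h2).const_mul M)
        filter_upwards [hres, ae_restrict_mem measurableSet_Icc] with u h5 h6
        exact h5 ⟨h1.trans h6.1, h6.2.trans h3⟩
      have hval : (∫ u in α..γ, M * Gc u) = M * (Hf (a - α) - Hf (a - γ)) := by
        rw [intervalIntegral.integral_const_mul, hGcval α γ h1 h2 h4]
      linarith
    -- the (*) inequality
    have hstar : ∀ s₀, 0 < s₀ → s₀ ≤ c → s₀ ≤ ϖ n →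
        x (a + s₀) ≤ s₀ * deriv x (a + s₀) + M * β (n+1) (-s₀) - s₀ * (M * Hf (-s₀)) := by
      intro s₀ h1 h2 h3
      have hx0 : x (a + s₀) = ∫ t in a..(a + s₀), deriv x t := by
        have := hxftc a (a + s₀)
        rw [hxa] at this
        linarith
      have hder : ∀ t : ℝ, deriv x t
          = deriv x (a + s₀) + ∫ u in t..(a + s₀), p u * x (u - τ u) := by
        intro t
        rw [hxrep (a + s₀) t, integral_symm]
        ring
      have hinner_cont : Continuous fun t => ∫ u in t..(a + s₀), p u * x (u - τ u) := by
        have h5 : Continuous fun t => ∫ u in (a + s₀)..t, p u * x (u - τ u) :=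
          intervalIntegral.continuous_primitive hFint (a + s₀)
        have h6 : (fun t => ∫ u in t..(a + s₀), p u * x (u - τ u))
            = fun t => -∫ u in (a + s₀)..t, p u * x (u - τ u) := by
          funext t; rw [integral_symm]
        rw [h6]; exact h5.neg
      have heq1 : x (a + s₀) = s₀ * deriv x (a + s₀)
          + ∫ t in a..(a + s₀), (∫ u in t..(a + s₀), p u * x (u - τ u)) := by
        rw [hx0]
        have : (fun t => deriv x t) = fun t =>
            deriv x (a + s₀) + ∫ u in t..(a + s₀), p u * x (u - τ u) := funext hder
        rw [show (∫ t in a..(a + s₀), deriv x t)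
            = ∫ t in a..(a + s₀), (deriv x (a + s₀) + ∫ u in t..(a + s₀), p u * x (u - τ u))
          from by rw [← this]]
        rw [intervalIntegral.integral_add intervalIntegrable_const
          (hinner_cont.intervalIntegrable _ _)]
        rw [intervalIntegral.integral_const, smul_eq_mul]
        ring
      have hHcomp_cont : ContinuousOn (fun t => Hf (a - t)) (Icc a (a + s₀)) := by
        apply hHcont.comp (by fun_prop : Continuous fun t : ℝ => a - t).continuousOn
        intro t ht
        exact ⟨show -ϖ n ≤ a - t by linarith [ht.2, h3], show a - t ≤ 0 by linarith [ht.1]⟩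
      have hb2 : (∫ t in a..(a + s₀), (∫ u in t..(a + s₀), p u * x (u - τ u)))
          ≤ ∫ t in a..(a + s₀), M * (Hf (a - t) - Hf (-s₀)) := by
        apply integral_mono_on (by linarith)
        · exact hinner_cont.intervalIntegrable _ _
        · apply ContinuousOn.intervalIntegrable
          rw [uIcc_of_le (by linarith : a ≤ a + s₀)]
          exact (hHcomp_cont.sub continuousOn_const).const_smul M
        · intro t ht
          have h5 := hIF t (a + s₀) ht.1 ht.2 (by linarith) (by
            have : a - (a + s₀) = -s₀ := by ring
            rw [this]; linarith)
          have e : a - (a + s₀) = -s₀ := by ring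
          rw [e] at h5
          exact (le_abs_self _).trans h5
      have hval2 : (∫ t in a..(a + s₀), M * (Hf (a - t) - Hf (-s₀)))
          = M * β (n+1) (-s₀) - s₀ * (M * Hf (-s₀)) := by
        have h5 : (fun t => M * (Hf (a - t) - Hf (-s₀)))
            = fun t => M * Hf (a - t) - M * Hf (-s₀) := by funext t; ring
        rw [h5]
        rw [intervalIntegral.integral_sub]
        · rw [intervalIntegral.integral_const_mul]
          have h6 : (∫ t in a..(a + s₀), Hf (a - t)) = ∫ u in (-s₀)..(0:ℝ), Hf u := by
            have := integral_comp_sub_left Hf a (a := a) (b := a + s₀)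
            rw [this]
            congr 1 <;> ring
          rw [h6, ← hbeq (-s₀) (by linarith) (by linarith)]
          rw [intervalIntegral.integral_const, smul_eq_mul]
          ring
        · apply ContinuousOn.intervalIntegrable
          rw [uIcc_of_le (by linarith : a ≤ a + s₀)]
          exact hHcomp_cont.const_smul M
        · exact intervalIntegrable_const
      linarith [heq1, hb2, hval2]
    -- Step F : ϖ n ≤ c
    have hstepF : ϖ n ≤ c := by
      by_contra hcon
      push_neg at hcon
      have h := hstar c hc le_rfl hcon.le
      rw [← hwc, hxw, hx'w] at h
      have h1 : β (n+1) (-c) ≤ 1 := ((hpack (n+1)).2.1 (-c) (by linarith)).2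
      have h2 : 0 < Hf (-c) := hHpos (-c) (by linarith) (by linarith)
      nlinarith [mul_pos (mul_pos hc hMpos) h2]
    refine ⟨hstepF, ?_⟩
    -- C (n+1)
    intro s hs0 hsc
    rcases le_or_gt (ϖ n) s with hges | hlts
    · rw [(hβ.2 n).2.1 (-s) (by linarith)]
      have := hxleM (a + s) ⟨by linarith, by linarith⟩
      linarith
    rcases eq_or_lt_of_le hs0 with heq0 | hs0'
    · rw [← heq0]
      simp only [add_zero, neg_zero, hxa]
      have := ((hpack (n+1)).2.1 0 le_rfl).1
      nlinarith
    by_contra hX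
    push_neg at hX
    have hstar_s := hstar s hs0' hsc hlts.le
    have hV : M * Hf (-s) < deriv x (a + s) := by nlinarith
    -- forward bound on deriv x
    have hfwd : ∀ t ∈ Icc (a + s) (a + ϖ n),
        deriv x (a + s) - M * Hf (-s) + M * Hf (a - t) ≤ deriv x t := by
      intro t ht
      have hder : deriv x t = deriv x (a + s)
          - ∫ u in (a + s)..t, p u * x (u - τ u) := hxrep (a + s) t
      have hb := hIF (a + s) t (by linarith) ht.1
        (show t ≤ a + c by linarith [ht.2, hstepF])
        (show -ϖ n ≤ a - t by linarith [ht.2])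
      have e : a - (a + s) = -s := by ring
      rw [e] at hb
      have := neg_abs_le (∫ u in (a + s)..t, p u * x (u - τ u))
      have := le_abs_self (∫ u in (a + s)..t, p u * x (u - τ u))
      rw [hder]
      linarith
    -- integrate the forward bound
    have hint2 : x (a + ϖ n) - x (a + s) = ∫ t in (a + s)..(a + ϖ n), deriv x t :=
      hxftc _ _
    have hHcomp_cont2 : ContinuousOn (fun t => Hf (a - t)) (Icc (a + s) (a + ϖ n)) := by
      apply hHcont.comp (by fun_prop : Continuous fun t : ℝ => a - t).continuousOn
      intro t ht
      exact ⟨show -ϖ n ≤ a - t by linarith [ht.2], show a - t ≤ 0 by linarith [ht.1, hs0]⟩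
    have hmono2 : (∫ t in (a + s)..(a + ϖ n),
        (deriv x (a + s) - M * Hf (-s) + M * Hf (a - t)))
        ≤ ∫ t in (a + s)..(a + ϖ n), deriv x t := by
      apply integral_mono_on (by linarith)
      · apply ContinuousOn.intervalIntegrable
        rw [uIcc_of_le (by linarith : a + s ≤ a + ϖ n)]
        exact (continuousOn_const.add (hHcomp_cont2.const_smul M))
      · exact hx'cont.intervalIntegrable _ _
      · exact hfwd
    have hval3 : (∫ t in (a + s)..(a + ϖ n),
        (deriv x (a + s) - M * Hf (-s) + M * Hf (a - t)))
        = (ϖ n - s) * (deriv x (a + s) - M * Hf (-s)) + M * (1 - β (n+1) (-s)) := by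
      rw [intervalIntegral.integral_add intervalIntegrable_const (by
        apply ContinuousOn.intervalIntegrable
        rw [uIcc_of_le (by linarith : a + s ≤ a + ϖ n)]
        exact hHcomp_cont2.const_smul M)]
      rw [intervalIntegral.integral_const, smul_eq_mul, intervalIntegral.integral_const_mul]
      have h6 : (∫ t in (a + s)..(a + ϖ n), Hf (a - t)) = ∫ u in (-ϖ n)..(-s), Hf u := by
        have := integral_comp_sub_left Hf a (a := a + s) (b := a + ϖ n)
        rw [this]
        congr 1 <;> ring
      have h7 : (∫ u in (-ϖ n)..(-s), Hf u) + ∫ u in (-s)..(0:ℝ), Hf u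
          = ∫ u in (-ϖ n)..(0:ℝ), Hf u :=
        integral_add_adjacent_intervals
          (H_int hβ hgm hg0 hgK hbc hb01 _ _ le_rfl (by linarith) (by linarith) (by linarith))
          (H_int hβ hgm hg0 hgK hbc hb01 _ _ (by linarith) (by linarith) (by linarith) le_rfl)
      rw [hHtot, ← hbeq (-s) (by linarith) (by linarith)] at h7
      rw [h6]
      have h8 : (∫ u in (-ϖ n)..(-s), Hf u) = 1 - β (n+1) (-s) := by linarith
      rw [h8]
      ring
    have hfin : M < x (a + ϖ n) := by
      have h9 : 0 < (ϖ n - s) * (deriv x (a + s) - M * Hf (-s)) := by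
        apply mul_pos (by linarith)
        linarith
      have h10 := ((hpack (n+1)).2.1 (-s) (by linarith)).2
      nlinarith [hint2, hmono2, hval3]
    have := hxleM (a + ϖ n) ⟨by linarith, by linarith [hstepF]⟩
    linarith
  have hCn : ∀ n, (∀ s, 0 ≤ s → s ≤ c → x (a + s) ≤ M * β n (-s)) := by
    intro n
    induction n with
    | zero =>
      intro s h1 h2
      rw [hβ.1 (-s) (by linarith)]
      have := hxleM (a + s) ⟨by linarith, by linarith⟩
      linarith
    | succ n ih => exact (hmain n ih).2
  intro n
  exact (hmain n (hCn n)).1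

end ZD

/-- in any semicycle `(a,b)`, the extremum is attained no earlier than
`a + Ψ(ρ / max_{[a,b]}|x|, Δ)`. -/
theorem semicycle_extremum_bound
    (Δ : ℝ) (hΔ : 0 ≤ Δ)
    (p τ x : ℝ → ℝ)
    (hpm : Measurable p) (hτm : Measurable τ) (hτ0 : ∀ t, 0 ≤ τ t)
    (hτb : ∃ M, ∀ᵐ t ∂(volume : Measure ℝ), |τ t| ≤ M)
    (hp1 : ∀ᵐ t ∂(volume : Measure ℝ), |p t| ≤ 1)
    (hτΔ : essSup τ volume ≤ Δ)
    (r : ℝ → ℝ) (θ : ℝ) (hr : IsDelayCosine Δ r) (hθ : IsFirstZero r θ)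
    (hx : SolvesDDE p τ x Set.univ)
    (a b : ℝ) (hab : a < b) (hxa : x a = 0) (hxb : x b = 0)
    (hsc : ∀ t ∈ Set.Ioo a b, x t ≠ 0)
    (ρ : ℝ) (hρ : 0 < ρ)
    (hρge : sSup ((fun t => |x t|) '' Set.Icc (a - Δ - θ) a) ≤ ρ)
    (M : ℝ) (hM : M = sSup ((fun t => |x t|) '' Set.Icc a b))
    (β : ℕ → ℝ → ℝ) (ϖ : ℕ → ℝ) (hβ : IsBetaSeq (gAux (ρ / M) Δ θ r) β ϖ)
    (Ψ : ℝ) (hΨ : Filter.Tendsto ϖ Filter.atTop (nhds Ψ)) :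
    ∀ w ∈ Set.Ioo a b, |x w| = M → Ψ ≤ w - a := by
  intro w hw hMw
  have hxd : ∀ t, HasDerivAt x (deriv x t) t := fun t => hx.1 t (mem_univ t)
  have hxrep : ∀ t₀ t : ℝ, deriv x t = deriv x t₀ - ∫ u in t₀..t, p u * x (u - τ u) :=
    fun t₀ t => hx.2 t₀ (mem_univ _) t (mem_univ _)
  have hxcont : Continuous x := by
    rw [continuous_iff_continuousAt]; exact fun t => (hxd t).continuousAt
  obtain ⟨Mτ, hMτ⟩ := hτb
  have hbdd : Filter.IsBoundedUnder (· ≤ ·) (ae (volume : Measure ℝ)) τ :=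
    ⟨Mτ, Filter.eventually_map.2 (hMτ.mono fun t h => le_trans (le_abs_self _) h)⟩
  have haeτ : ∀ᵐ u ∂(volume : Measure ℝ), τ u ≤ Δ := by
    have hq : ∀ q : ℕ, ∀ᵐ u ∂(volume : Measure ℝ), τ u < Δ + 1/(q+1) := by
      intro q
      apply ae_lt_of_essSup_lt _ hbdd
      have h0 : (0:ℝ) < 1/((q:ℝ)+1) := by positivity
      linarith [hτΔ]
    have hall := (ae_all_iff).2 hq
    filter_upwards [hall] with u hu
    by_contra hcon
    push_neg at hcon
    obtain ⟨q, hq'⟩ := exists_nat_one_div_lt (by linarith : (0:ℝ) < τ u - Δ)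
    have h2 := hu q
    have h3 : (1:ℝ)/((q:ℝ)+1) < τ u - Δ := by exact_mod_cast hq'
    linarith
  have hFint : ∀ α γ : ℝ, IntervalIntegrable (fun u => p u * x (u - τ u)) volume α γ := by
    intro α γ
    have hmeas : Measurable fun u => p u * x (u - τ u) :=
      hpm.mul (hxcont.measurable.comp (measurable_id.sub hτm))
    set K := max Mτ 0 with hK
    obtain ⟨C, hC⟩ := (isCompact_Icc (a := min α γ - K)
      (b := max α γ + K)).exists_bound_of_continuousOn hxcont.continuousOn
    apply ZD.II_of_meas_bdd (K := C) hmeas.aestronglyMeasurable.restrict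
    filter_upwards [ae_restrict_mem measurableSet_uIoc, ae_restrict_of_ae hMτ,
      ae_restrict_of_ae hp1] with u hu hτu hpu
    have h1 : |p u * x (u - τ u)| ≤ |x (u - τ u)| := by
      rw [abs_mul]
      nlinarith [abs_nonneg (x (u - τ u)), abs_nonneg (p u)]
    have h2 : u - τ u ∈ Icc (min α γ - K) (max α γ + K) := by
      have hτK : |τ u| ≤ K := le_trans hτu (le_max_left _ _)
      rw [abs_le] at hτK
      constructor
      · have := hu.1.le
        simp only [hK] at hτK ⊢
        linarith [this, hτK.2]
      · have := hu.2
        have hK0 : 0 ≤ K := le_max_right _ _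
        linarith [hτ0 u, this, hK0]
    have := hC _ h2
    rw [Real.norm_eq_abs] at this
    exact le_trans h1 this
  have hbb : BddAbove ((fun t => |x t|) '' Icc a b) :=
    (isCompact_Icc.image_of_continuousOn hxcont.abs.continuousOn).bddAbove
  have hMge : ∀ t ∈ Icc a b, |x t| ≤ M := by
    intro t ht
    rw [hM]
    exact le_csSup hbb (mem_image_of_mem _ ht)
  have hbb2 : BddAbove ((fun t => |x t|) '' Icc (a - Δ - θ) a) :=
    (isCompact_Icc.image_of_continuousOn hxcont.abs.continuousOn).bddAbove
  have hρbound : ∀ t ∈ Icc (a - Δ - θ) a, |x t| ≤ ρ :=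
    fun t ht => le_trans (le_csSup hbb2 (mem_image_of_mem _ ht)) hρge
  have hMpos : 0 < M := by rw [← hMw]; exact abs_pos.2 (hsc w hw)
  have hrc : Continuous r := ZD.r_cont hr
  have hgm : Measurable (gAux (ρ / M) Δ θ r) := by
    apply Measurable.indicator _ measurableSet_Icc
    fun_prop
  have hg0 : ∀ u, 0 ≤ gAux (ρ / M) Δ θ r u := by
    intro u
    apply Set.indicator_nonneg
    intro w' hw'
    simp only [mem_Icc] at hw'
    have h1 : θ - w' - Δ ≤ θ := by linarith [hw'.1]
    have h2 := ZD.r_nonneg hr hθ _ h1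
    have h3 : 0 ≤ ρ / M := by positivity
    nlinarith
  have hgK : ∀ u, gAux (ρ / M) Δ θ r u ≤ ρ / M := by
    intro u
    by_cases hmem : u ∈ Icc (-Δ) (0:ℝ)
    · rw [gAux, indicator_of_mem hmem]
      simp only [mem_Icc] at hmem
      have h1 : θ - u - Δ ≤ θ := by linarith [hmem.1]
      have h2 := ZD.r_le_one hΔ hr hθ _ h1
      have h3 := ZD.r_nonneg hr hθ _ h1
      have h4 : 0 ≤ ρ / M := by positivity
      nlinarith
    · rw [gAux, indicator_of_notMem hmem]
      positivity
  have hgval : ∀ s, 0 ≤ s → s ≤ Δ → M * gAux (ρ / M) Δ θ r (-s) = ρ * r (θ + s - Δ) := by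
    intro s h1 h2
    have hmem : (-s) ∈ Icc (-Δ) (0:ℝ) := by
      simp only [mem_Icc]
      constructor <;> linarith
    rw [gAux, indicator_of_mem hmem]
    have e : θ - (-s) - Δ = θ + s - Δ := by ring
    rw [e]
    field_simp
  have hsign : (∀ t ∈ Ioo a b, 0 < x t) ∨ (∀ t ∈ Ioo a b, x t < 0) := by
    by_contra hcon
    push_neg at hcon
    obtain ⟨⟨t1, ht1, ht1'⟩, ⟨t2, ht2, ht2'⟩⟩ := hcon
    have hx1 : x t1 < 0 := lt_of_le_of_ne ht1' (hsc t1 ht1)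
    have hx2 : 0 < x t2 := lt_of_le_of_ne ht2' (Ne.symm (hsc t2 ht2))
    rcases lt_trichotomy t1 t2 with h | h | h
    · have hIV := intermediate_value_Ioo h.le hxcont.continuousOn
      obtain ⟨z, hz, hz0⟩ := hIV (show (0:ℝ) ∈ Ioo (x t1) (x t2) from ⟨hx1, hx2⟩)
      exact hsc z ⟨lt_trans ht1.1 hz.1, lt_trans hz.2 ht2.2⟩ hz0
    · rw [h] at hx1; linarith
    · have hIV := intermediate_value_Ioo' h.le hxcont.continuousOn
      obtain ⟨z, hz, hz0⟩ := hIV (show (0:ℝ) ∈ Ioo (x t1) (x t2) from ⟨hx1, hx2⟩)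
      exact hsc z ⟨lt_trans ht2.1 hz.1, lt_trans hz.2 ht1.2⟩ hz0
  have hconc : ∀ n, ϖ n ≤ w - a := by
    rcases hsign with hpos | hneg
    · -- positive semicycle
      have hxpos : ∀ t ∈ Icc a b, 0 ≤ x t := by
        intro t ht
        rcases eq_or_lt_of_le ht.1 with h | h1
        · rw [← h, hxa]
        · rcases eq_or_lt_of_le ht.2 with h | h2
          · rw [h, hxb]
          · exact (hpos t ⟨h1, h2⟩).le
      have hxleM : ∀ t ∈ Icc a b, x t ≤ M := fun t ht => (le_abs_self _).trans (hMge t ht)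
      have hxw : x w = M := by rw [← hMw, abs_of_pos (hpos w hw)]
      have hx'w : deriv x w = 0 := by
        have hloc : IsLocalMax x w := by
          filter_upwards [Ioo_mem_nhds hw.1 hw.2] with t ht
          calc x t ≤ M := hxleM t ⟨ht.1.le, ht.2.le⟩
            _ = x w := hxw.symm
        exact hloc.hasDerivAt_eq_zero (hxd w)
      exact ZD.main_pos hΔ hr hθ hρ hMpos hxd hxrep hFint hp1 haeτ hτ0 hw hxa hxpos
        hxleM hxw hx'w hρbound hgm hg0 hgK hgval hβ
    · -- negative semicycle : use -x
      have hyd : ∀ t, HasDerivAt (fun t => -x t) (deriv (fun t => -x t) t) t := by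
        intro t
        rw [deriv.fun_neg]
        exact (hxd t).neg
      have hyrep : ∀ t₀ t : ℝ, deriv (fun t => -x t) t
          = deriv (fun t => -x t) t₀ - ∫ u in t₀..t, p u * (-x (u - τ u)) := by
        intro t₀ t
        have e3 : (∫ u in t₀..t, p u * -x (u - τ u))
            = -∫ u in t₀..t, p u * x (u - τ u) := by
          rw [← intervalIntegral.integral_neg]
          congr 1; funext u; ring
        rw [deriv.fun_neg, deriv.fun_neg, e3, hxrep t₀ t]
        ring
      have hFint2 : ∀ α γ : ℝ,
          IntervalIntegrable (fun u => p u * (-x (u - τ u))) volume α γ := by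
        intro α γ
        have h' := (hFint α γ).neg
        convert h' using 1
        funext u
        simp only [Pi.neg_apply]
        ring
      have hypos : ∀ t ∈ Icc a b, 0 ≤ -x t := by
        intro t ht
        rcases eq_or_lt_of_le ht.1 with h | h1
        · rw [← h, hxa]; norm_num
        · rcases eq_or_lt_of_le ht.2 with h | h2
          · rw [h, hxb]; norm_num
          · linarith [hneg t ⟨h1, h2⟩]
      have hyleM : ∀ t ∈ Icc a b, -x t ≤ M :=
        fun t ht => (neg_le_abs _).trans (hMge t ht)
      have hyw : -x w = M := by
        rw [← hMw, abs_of_neg (hneg w hw)]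
      have hy'w : deriv (fun t => -x t) w = 0 := by
        rw [deriv.fun_neg]
        have hloc : IsLocalMin x w := by
          filter_upwards [Ioo_mem_nhds hw.1 hw.2] with t ht
          have := hyleM t ⟨ht.1.le, ht.2.le⟩
          have e : x w = -M := by linarith [hyw]
          rw [e]; linarith
        rw [hloc.hasDerivAt_eq_zero (hxd w)]
        ring
      have hρbound2 : ∀ t ∈ Icc (a - Δ - θ) a, |(-x t)| ≤ ρ := by
        intro t ht
        rw [abs_neg]
        exact hρbound t ht
      exact ZD.main_pos hΔ hr hθ hρ hMpos (x := fun t => -x t) hyd hyrep hFint2 hp1 haeτ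
        hτ0 hw (show -x a = 0 by rw [hxa]; ring) hypos hyleM hyw hy'w hρbound2 hgm hg0 hgK hgval hβ
  exact le_of_tendsto hΨ (Filter.Eventually.of_forall hconc)
end

section
/- Ψ(ρ, 0) = π/2 for every ρ > 0, and Ψ(1, Δ) = √2 for every Δ ≥ 2√2; in the latter case the limit function satisfies y_{1,Δ}(w) = 1 − (w + √2)²/2 for w ∈ [−√2, 0]. -/
open MeasureTheory Set Filter

namespace PsiAux
open intervalIntegral

lemma intervalIntegrable_of_bounded {f : ℝ → ℝ} (hm : Measurable f)
    (hb : ∀ x, |f x| ≤ 1) (a b : ℝ) : IntervalIntegrable f MeasureTheory.volume a b := by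
  rw [intervalIntegrable_iff]
  apply MeasureTheory.Measure.integrableOn_of_bounded (M := 1)
  · exact (measure_Ioc_lt_top).ne
  · exact hm.aestronglyMeasurable
  · exact MeasureTheory.ae_of_all _ (fun x => by simpa using hb x)

lemma double_mono {F F' : ℝ → ℝ} (hF : Continuous F) (hF' : Continuous F')
    (hle : ∀ w ≤ (0:ℝ), F w ≤ F' w) {c : ℝ} (hc : 0 < c) :
    (∫ s in (-c)..0, ∫ w in (-c)..s, F w) ≤ ∫ s in (-c)..0, ∫ w in (-c)..s, F' w := by
  apply integral_mono_on (by linarith)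
  · exact (intervalIntegral.continuous_primitive (fun a b => hF.intervalIntegrable a b) (-c)).intervalIntegrable _ _
  · exact (intervalIntegral.continuous_primitive (fun a b => hF'.intervalIntegrable a b) (-c)).intervalIntegrable _ _
  · intro s hs
    apply integral_mono_on hs.1 (hF.intervalIntegrable _ _) (hF'.intervalIntegrable _ _)
    intro w hw
    exact hle w (le_trans hw.2 hs.2)

lemma double_strict {F : ℝ → ℝ} (hF : Continuous F) (h0 : ∀ w, 0 ≤ F w)
    (hpos : ∀ w < (0:ℝ), 0 < F w) {c c' : ℝ} (hc : 0 < c) (hcc : c < c') :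
    (∫ s in (-c)..0, ∫ w in (-c)..s, F w) < ∫ s in (-c')..0, ∫ w in (-c')..s, F w := by
  set K := ∫ w in (-c')..(-c), F w with hKdef
  have hK : 0 < K := by
    apply intervalIntegral_pos_of_pos_on (hF.intervalIntegrable _ _)
    · intro x hx; exact hpos x (by linarith [hx.2])
    · linarith
  have hsplitG : ∀ s, (∫ w in (-c')..s, F w) = K + ∫ w in (-c)..s, F w := fun s =>
    (integral_add_adjacent_intervals (hF.intervalIntegrable _ _) (hF.intervalIntegrable _ _)).symm
  have hGcont : Continuous fun s => ∫ w in (-c)..s, F w :=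
    intervalIntegral.continuous_primitive (fun a b => hF.intervalIntegrable a b) (-c)
  have hGcont' : Continuous fun s => ∫ w in (-c')..s, F w :=
    intervalIntegral.continuous_primitive (fun a b => hF.intervalIntegrable a b) (-c')
  have hsplit : (∫ s in (-c')..0, ∫ w in (-c')..s, F w)
      = (∫ s in (-c')..(-c), ∫ w in (-c')..s, F w) + ∫ s in (-c)..0, ∫ w in (-c')..s, F w :=
    (integral_add_adjacent_intervals (hGcont'.intervalIntegrable _ _) (hGcont'.intervalIntegrable _ _)).symm
  have h2 : (∫ s in (-c)..0, ∫ w in (-c')..s, F w)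
      = c * K + ∫ s in (-c)..0, ∫ w in (-c)..s, F w := by
    rw [integral_congr (g := fun s => K + ∫ w in (-c)..s, F w) (fun s _ => hsplitG s),
      integral_add (intervalIntegrable_const) (hGcont.intervalIntegrable _ _)]
    simp [mul_comm]
  have h3 : 0 ≤ ∫ s in (-c')..(-c), ∫ w in (-c')..s, F w := by
    apply integral_nonneg (by linarith)
    intro s hs
    exact integral_nonneg (by linarith [hs.1]) (fun w _ => h0 w)
  nlinarith

lemma tail_nonneg {h : ℝ → ℝ} {a : ℝ} (hcont : Continuous h)
    (hmono : ∀ s s', -a ≤ s → s ≤ s' → s' ≤ 0 → h s ≤ h s')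
    (htot : 0 ≤ ∫ s in (-a)..0, h s) {t : ℝ} (ht1 : -a ≤ t) (ht2 : t ≤ 0) :
    0 ≤ ∫ s in t..0, h s := by
  by_contra hneg
  push_neg at hneg
  rcases le_or_gt 0 (h t) with hht | hht
  · have : (0:ℝ) ≤ ∫ s in t..0, h s :=
      integral_nonneg ht2 (fun u hu => le_trans hht (hmono t u ht1 hu.1 hu.2))
    linarith
  · have h1 : (∫ s in (-a)..t, h s) ≤ ∫ s in (-a)..t, h t := by
      apply integral_mono_on ht1 (hcont.intervalIntegrable _ _) intervalIntegrable_const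
      intro u hu
      exact hmono u t hu.1 hu.2 ht2
    have h2 : (∫ s in (-a)..t, (h t : ℝ)) = (t - (-a)) * h t := by simp [mul_comm]
    have h3 : (t - (-a)) * h t ≤ 0 :=
      mul_nonpos_of_nonneg_of_nonpos (by linarith) hht.le
    have h4 : (∫ s in (-a)..t, h s) + (∫ s in t..0, h s) = ∫ s in (-a)..0, h s :=
      integral_add_adjacent_intervals (hcont.intervalIntegrable _ _) (hcont.intervalIntegrable _ _)
    linarith

lemma cos_identify {y : ℝ → ℝ} {Ψ : ℝ} (hΨ : 0 < Ψ)
    (hmeas : Measurable y) (hynn : ∀ x, 0 ≤ y x) (hyle : ∀ x, y x ≤ 1)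
    (hyPsi : y (-Ψ) = 1) (hy0 : y 0 = 0)
    (hkey : ∀ t, -Ψ < t → t ≤ 0 → y t = 1 - ∫ s in (-Ψ)..t, ∫ w in (-Ψ)..s, y w) :
    Ψ = Real.pi / 2 := by
  have hyint : ∀ a b : ℝ, IntervalIntegrable y MeasureTheory.volume a b :=
    intervalIntegrable_of_bounded hmeas
      (fun x => abs_le.mpr ⟨by linarith [hynn x], hyle x⟩)
  set J : ℝ → ℝ := fun s => ∫ w in (-Ψ)..s, y w with hJdef
  have hJcont : Continuous J := intervalIntegral.continuous_primitive hyint (-Ψ)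
  set Y : ℝ → ℝ := fun x => 1 - ∫ s in (-Ψ)..x, J s with hYdef
  have hYcont : Continuous Y :=
    continuous_const.sub
      (intervalIntegral.continuous_primitive (fun a b => hJcont.intervalIntegrable a b) (-Ψ))
  have hYPsi : Y (-Ψ) = 1 := by rw [hYdef]; simp
  have hyY : ∀ x, -Ψ ≤ x → x ≤ 0 → y x = Y x := by
    intro x h1 h2
    rcases eq_or_lt_of_le h1 with h | h
    · rw [← h, hyPsi, hYPsi]
    · rw [hkey x h h2, hYdef]
  set K : ℝ → ℝ := fun s => ∫ w in (-Ψ)..s, Y w with hKdef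
  have hJK : ∀ s, -Ψ ≤ s → s ≤ 0 → J s = K s := by
    intro s h1 h2
    rw [hJdef, hKdef]
    apply integral_congr
    intro w hw
    rw [uIcc_of_le h1] at hw
    exact hyY w hw.1 (le_trans hw.2 h2)
  have hYd : ∀ x, HasDerivAt Y (-(J x)) x := by
    intro x
    have h1 : HasDerivAt (fun u => ∫ s in (-Ψ)..u, J s) (J x) x :=
      intervalIntegral.integral_hasDerivAt_right (hJcont.intervalIntegrable _ _)
        (hJcont.stronglyMeasurableAtFilter _ _) hJcont.continuousAt
    have := (hasDerivAt_const x (1:ℝ)).sub h1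
    rw [zero_sub] at this; exact this
  have hKd : ∀ x, HasDerivAt K (Y x) x := by
    intro x
    exact intervalIntegral.integral_hasDerivAt_right (hYcont.intervalIntegrable _ _)
      (hYcont.stronglyMeasurableAtFilter _ _) hYcont.continuousAt
  -- energy method
  set u : ℝ → ℝ := fun x => Y x - Real.cos (x + Ψ) with hudef
  set v : ℝ → ℝ := fun x => K x - Real.sin (x + Ψ) with hvdef
  have hcosd : ∀ x : ℝ, HasDerivAt (fun z => Real.cos (z + Ψ)) (-Real.sin (x + Ψ)) x := by
    intro x
    have h1 : HasDerivAt (fun z : ℝ => z + Ψ) 1 x := (hasDerivAt_id x).add_const Ψ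
    have := (Real.hasDerivAt_cos (x + Ψ)).comp x h1
    rw [mul_one] at this; exact this
  have hsind : ∀ x : ℝ, HasDerivAt (fun z => Real.sin (z + Ψ)) (Real.cos (x + Ψ)) x := by
    intro x
    have h1 : HasDerivAt (fun z : ℝ => z + Ψ) 1 x := (hasDerivAt_id x).add_const Ψ
    have := (Real.hasDerivAt_sin (x + Ψ)).comp x h1
    rw [mul_one] at this; exact this
  have hud : ∀ x, -Ψ ≤ x → x ≤ 0 → HasDerivAt u (-(v x)) x := by
    intro x h1 h2
    have := (hYd x).sub (hcosd x)
    have heq : -(J x) - -Real.sin (x + Ψ) = -(v x) := by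
      rw [hJK x h1 h2, hvdef]; ring
    rw [heq] at this
    exact this
  have hvd : ∀ x, HasDerivAt v (u x) x := by
    intro x
    have := (hKd x).sub (hsind x)
    rwa [show Y x - Real.cos (x + Ψ) = u x from rfl] at this
  set E : ℝ → ℝ := fun x => u x ^ 2 + v x ^ 2 with hEdef
  have hEd : ∀ x, -Ψ ≤ x → x ≤ 0 → HasDerivAt E 0 x := by
    intro x h1 h2
    have h3 := ((hud x h1 h2).fun_pow 2).fun_add ((hvd x).fun_pow 2)
    refine h3.congr_deriv ?_
    push_cast
    ring
  have hE0 : E (-Ψ) = 0 := by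
    rw [hEdef]
    simp only [hudef, hvdef]
    rw [hYPsi, hKdef]
    simp
  have hEconst : ∀ x, -Ψ ≤ x → x ≤ 0 → E x = 0 := by
    intro x h1 h2
    have hint : (∫ z in (-Ψ)..x, (0:ℝ)) = E x - E (-Ψ) := by
      apply integral_eq_sub_of_hasDerivAt
      · intro z hz
        rw [uIcc_of_le h1] at hz
        exact hEd z hz.1 (le_trans hz.2 h2)
      · exact intervalIntegrable_const
    simp at hint
    linarith [hE0, hint]
  have hYcos : ∀ x, -Ψ ≤ x → x ≤ 0 → Y x = Real.cos (x + Ψ) := by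
    intro x h1 h2
    have hEx : u x ^ 2 + v x ^ 2 = 0 := hEconst x h1 h2
    have hu2 : u x ^ 2 = 0 := by nlinarith [sq_nonneg (u x), sq_nonneg (v x)]
    have hu0 : u x = 0 := by
      exact (pow_eq_zero_iff two_ne_zero).mp hu2
    have hu0' : Y x - Real.cos (x + Ψ) = 0 := hu0
    linarith
  have hcosΨ : Real.cos Ψ = 0 := by
    have h1 : y 0 = Y 0 := hyY 0 (by linarith) le_rfl
    have h2 : Y 0 = Real.cos Ψ := by
      have := hYcos 0 (by linarith) le_rfl
      simpa using this
    rw [hy0] at h1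
    linarith [h1, h2]
  have hYnn : ∀ x, -Ψ ≤ x → x ≤ 0 → 0 ≤ Y x := by
    intro x h1 h2
    rw [← hyY x h1 h2]
    exact hynn x
  have hpi := Real.pi_pos
  rcases lt_trichotomy Ψ (Real.pi / 2) with hlt | heq | hgt
  · exfalso
    have : 0 < Real.cos Ψ := Real.cos_pos_of_mem_Ioo ⟨by linarith, hlt⟩
    linarith
  · exact heq
  · exfalso
    set a := min Ψ Real.pi with hadef
    have ha1 : Real.pi / 2 < a := lt_min hgt (by linarith)
    have ha2 : a ≤ Ψ := min_le_left _ _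
    have ha3 : a < Real.pi + Real.pi / 2 := lt_of_le_of_lt (min_le_right _ _) (by linarith)
    have hcos : Real.cos a < 0 := Real.cos_neg_of_pi_div_two_lt_of_lt ha1 ha3
    have hx1 : -Ψ ≤ a - Ψ := by linarith
    have hx2 : a - Ψ ≤ 0 := by linarith
    have := hYnn (a - Ψ) hx1 hx2
    rw [hYcos (a - Ψ) hx1 hx2] at this
    simp only [sub_add_cancel] at this
    linarith


lemma part1 (β : ℕ → ℝ → ℝ) (ϖ : ℕ → ℝ) (Ψ : ℝ)
    (hβ0 : ∀ t ≤ (0:ℝ), β 0 t = 1)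
    (hwpos : ∀ n, 0 < ϖ n)
    (heq : ∀ n, (∫ s in (-ϖ n)..(0:ℝ), ∫ w in (-ϖ n)..s, max (β n w) 0) = 1)
    (hup : ∀ n, ∀ t ≤ -ϖ n, β (n+1) t = 1)
    (hmid : ∀ n t, -ϖ n ≤ t → t ≤ 0 →
      β (n+1) t = 1 - ∫ s in (-ϖ n)..t, ∫ w in (-ϖ n)..s, max (β n w) 0)
    (htend : Filter.Tendsto ϖ Filter.atTop (nhds Ψ)) : Ψ = Real.pi / 2 := by
  classical
  set B : ℕ → ℝ → ℝ := fun n t => max (β n (min t 0)) 0 with hBdef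
  have hB_eq : ∀ n t, t ≤ 0 → B n t = max (β n t) 0 := by
    intro n t ht
    rw [hBdef]
    simp only [min_eq_left ht]
  have hB_nonneg : ∀ n t, 0 ≤ B n t := fun n t => le_max_right _ _
  have hIcongr : ∀ n (a b : ℝ), a ≤ 0 → b ≤ 0 →
      (∫ w in a..b, max (β n w) 0) = ∫ w in a..b, B n w := by
    intro n a b ha hb
    apply integral_congr
    intro w hw
    have hw0 : w ≤ 0 := le_trans hw.2 (max_le ha hb)
    exact (hB_eq n w hw0).symm
  have heqB : ∀ n, (∫ s in (-ϖ n)..(0:ℝ), ∫ w in (-ϖ n)..s, B n w) = 1 := by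
    intro n
    rw [← heq n]
    apply integral_congr
    intro s hs
    have hs0 : s ≤ 0 := le_trans hs.2 (max_le (by linarith [hwpos n]) le_rfl)
    exact (hIcongr n _ s (by linarith [hwpos n]) hs0).symm
  have hmidB : ∀ n t, -ϖ n ≤ t → t ≤ 0 →
      β (n+1) t = 1 - ∫ s in (-ϖ n)..t, ∫ w in (-ϖ n)..s, B n w := by
    intro n t h1 h2
    rw [hmid n t h1 h2]
    congr 1
    apply integral_congr
    intro s hs
    have hs0 : s ≤ 0 := le_trans hs.2 (max_le (by linarith [hwpos n]) h2)
    exact hIcongr n _ s (by linarith [hwpos n]) hs0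
  -- main induction: continuity and bounds
  have hgood : ∀ n, Continuous (B n) ∧ (∀ t ≤ (0:ℝ), β n t ≤ 1) ∧
      (∀ t, t < (0:ℝ) → 0 < β n t) ∧ (∀ t ≤ (0:ℝ), 0 ≤ β n t) := by
    intro n
    induction n with
    | zero =>
      have hB0 : B 0 = fun _ => 1 := by
        funext t
        rw [hBdef]
        simp only
        rw [hβ0 (min t 0) (min_le_right t 0)]
        simp
      exact ⟨by rw [hB0]; exact continuous_const,
        fun t ht => le_of_eq (hβ0 t ht),
        fun t ht => by rw [hβ0 t ht.le]; norm_num,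
        fun t ht => by rw [hβ0 t ht]; norm_num⟩
    | succ n ih =>
      obtain ⟨hc, hle1, hpos', hnn⟩ := ih
      have ha := hwpos n
      have hGc : Continuous (fun s => ∫ w in (-ϖ n)..s, B n w) :=
        intervalIntegral.continuous_primitive (fun a b => hc.intervalIntegrable a b) _
      have hGnn : ∀ s, -ϖ n ≤ s → 0 ≤ ∫ w in (-ϖ n)..s, B n w := fun s hs =>
        integral_nonneg hs (fun w _ => hB_nonneg n w)
      have hGpos : ∀ s, -ϖ n < s → s ≤ 0 → 0 < ∫ w in (-ϖ n)..s, B n w := by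
        intro s h1 h2
        apply intervalIntegral_pos_of_pos_on (hc.intervalIntegrable _ _) _ h1
        intro x hx
        have hx0 : x < 0 := lt_of_lt_of_le hx.2 h2
        have hb : 0 < β n x := hpos' x hx0
        have : β n x ≤ B n x := by rw [hB_eq n x hx0.le]; exact le_max_left _ _
        linarith
      have hIadd : ∀ t, -ϖ n ≤ t → t ≤ 0 →
          (∫ s in (-ϖ n)..t, ∫ w in (-ϖ n)..s, B n w)
            + (∫ s in t..0, ∫ w in (-ϖ n)..s, B n w) = 1 := by
        intro t h1 h2
        rw [integral_add_adjacent_intervals (hGc.intervalIntegrable _ _) (hGc.intervalIntegrable _ _)]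
        exact heqB n
      have hInn : ∀ t, -ϖ n ≤ t → 0 ≤ ∫ s in (-ϖ n)..t, ∫ w in (-ϖ n)..s, B n w := fun t h1 =>
        integral_nonneg h1 (fun s hs => hGnn s hs.1)
      have htail : ∀ t, -ϖ n ≤ t → t ≤ 0 → 0 ≤ ∫ s in t..0, ∫ w in (-ϖ n)..s, B n w := fun t h1 h2 =>
        integral_nonneg h2 (fun s hs => hGnn s (le_trans h1 hs.1))
      have htailpos : ∀ t, -ϖ n ≤ t → t < 0 → 0 < ∫ s in t..0, ∫ w in (-ϖ n)..s, B n w := by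
        intro t h1 h2
        apply intervalIntegral_pos_of_pos_on (hGc.intervalIntegrable _ _) _ h2
        intro s hs
        exact hGpos s (lt_of_le_of_lt h1 hs.1) hs.2.le
      have hform : ∀ t, -ϖ n ≤ t → t ≤ 0 → β (n+1) t = ∫ s in t..0, ∫ w in (-ϖ n)..s, B n w := by
        intro t h1 h2
        rw [hmidB n t h1 h2]
        linarith [hIadd t h1 h2]
      refine ⟨?_, ?_, ?_, ?_⟩
      · have hcont2 : Continuous fun x => ∫ s in x..(0:ℝ), ∫ w in (-ϖ n)..s, B n w := by
          have h5 : Continuous fun x => ∫ s in (0:ℝ)..x, ∫ w in (-ϖ n)..s, B n w :=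
            intervalIntegral.continuous_primitive (fun a b => hGc.intervalIntegrable a b) 0
          have heqf : (fun x => ∫ s in x..(0:ℝ), ∫ w in (-ϖ n)..s, B n w)
              = fun x => -(∫ s in (0:ℝ)..x, ∫ w in (-ϖ n)..s, B n w) := by
            funext x; rw [integral_symm]
          rw [heqf]; exact h5.neg
        have hBform : B (n+1) = fun t =>
            max (∫ s in (max (min t 0) (-ϖ n))..(0:ℝ), ∫ w in (-ϖ n)..s, B n w) 0 := by
          funext t
          have hu : min t 0 ≤ 0 := min_le_right t 0
          rw [hBdef]
          simp only
          rcases le_or_gt (min t 0) (-ϖ n) with hcase | hcase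
          · rw [hup n _ hcase, max_eq_right hcase]
            have : (∫ s in (-ϖ n)..(0:ℝ), ∫ w in (-ϖ n)..s, B n w) = 1 := heqB n
            rw [this]
          · rw [hform _ hcase.le hu, max_eq_left hcase.le]
        rw [hBform]
        exact (hcont2.comp (((continuous_id.min continuous_const).max continuous_const))).max
          continuous_const
      · intro t ht
        rcases le_or_gt t (-ϖ n) with hcase | hcase
        · rw [hup n t hcase]
        · rw [hmidB n t hcase.le ht]
          linarith [hInn t hcase.le]
      · intro t ht
        rcases le_or_gt t (-ϖ n) with hcase | hcase
        · rw [hup n t hcase]; norm_num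
        · rw [hform t hcase.le ht.le]; exact htailpos t hcase.le ht
      · intro t ht
        rcases le_or_gt t (-ϖ n) with hcase | hcase
        · rw [hup n t hcase]; norm_num
        · rw [hform t hcase.le ht]; exact htail t hcase.le ht
  -- global facts
  have hBcont : ∀ n, Continuous (B n) := fun n => (hgood n).1
  have hBle1 : ∀ n t, B n t ≤ 1 := by
    intro n t
    rw [hBdef]
    simp only
    exact max_le ((hgood n).2.1 _ (min_le_right t 0)) zero_le_one
  have hBpos : ∀ n w, w < 0 → 0 < B n w := by
    intro n w hw
    rw [hB_eq n w hw.le]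
    exact lt_of_lt_of_le ((hgood n).2.2.1 w hw) (le_max_left _ _)
  have hGcont : ∀ n, Continuous (fun s => ∫ w in (-ϖ n)..s, B n w) := fun n =>
    intervalIntegral.continuous_primitive (fun a b => (hBcont n).intervalIntegrable a b) _
  have hGnn : ∀ n s, -ϖ n ≤ s → 0 ≤ ∫ w in (-ϖ n)..s, B n w := fun n s hs =>
    integral_nonneg hs (fun w _ => hB_nonneg n w)
  have hform : ∀ n t, -ϖ n ≤ t → t ≤ 0 →
      β (n+1) t = ∫ s in t..0, ∫ w in (-ϖ n)..s, B n w := by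
    intro n t h1 h2
    have hIadd : (∫ s in (-ϖ n)..t, ∫ w in (-ϖ n)..s, B n w)
        + (∫ s in t..0, ∫ w in (-ϖ n)..s, B n w) = 1 := by
      rw [integral_add_adjacent_intervals ((hGcont n).intervalIntegrable _ _)
        ((hGcont n).intervalIntegrable _ _)]
      exact heqB n
    rw [hmidB n t h1 h2]
    linarith
  -- step 1 : monotonicity of ϖ
  have hstep1 : ∀ n, (∀ t ≤ (0:ℝ), β (n+1) t ≤ β n t) → ϖ n ≤ ϖ (n+1) := by
    intro n hd
    by_contra hlt
    push_neg at hlt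
    have hBle : ∀ w ≤ (0:ℝ), B (n+1) w ≤ B n w := by
      intro w hw
      rw [hB_eq _ _ hw, hB_eq _ _ hw]
      exact max_le_max (hd w hw) le_rfl
    have e2 := double_strict (hBcont (n+1)) (hB_nonneg (n+1)) (hBpos (n+1)) (hwpos (n+1)) hlt
    have e3 := double_mono (hBcont (n+1)) (hBcont n) hBle (hwpos n)
    have e4 := heqB (n+1)
    have e5 := heqB n
    linarith
  -- step 2 : monotone decrease of β
  have hstep2 : ∀ n, (∀ t ≤ (0:ℝ), β (n+1) t ≤ β n t) → ϖ n ≤ ϖ (n+1) →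
      ∀ t ≤ (0:ℝ), β (n+2) t ≤ β (n+1) t := by
    intro n hd hab t ht
    rcases le_or_gt t (-ϖ (n+1)) with hc1 | hc1
    · rw [hup (n+1) t hc1, hup n t (by linarith)]
    · rcases le_or_gt t (-ϖ n) with hc2 | hc2
      · rw [hup n t hc2]
        exact (hgood (n+2)).2.1 t ht
      · have hBle : ∀ w ≤ (0:ℝ), B (n+1) w ≤ B n w := by
          intro w hw
          rw [hB_eq _ _ hw, hB_eq _ _ hw]
          exact max_le_max (hd w hw) le_rfl
        have hf1 : β (n+1) t = ∫ s in t..0, ∫ w in (-ϖ n)..s, B n w := hform n t hc2.le ht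
        have hf2 : β (n+2) t = ∫ s in t..0, ∫ w in (-ϖ (n+1))..s, B (n+1) w :=
          hform (n+1) t (by linarith) ht
        have hsub : β (n+1) t - β (n+2) t
            = ∫ s in t..0, ((∫ w in (-ϖ n)..s, B n w) - ∫ w in (-ϖ (n+1))..s, B (n+1) w) := by
          rw [hf1, hf2, integral_sub ((hGcont n).intervalIntegrable _ _)
            ((hGcont (n+1)).intervalIntegrable _ _)]
        have hmono : ∀ s s', -ϖ n ≤ s → s ≤ s' → s' ≤ 0 →
            ((∫ w in (-ϖ n)..s, B n w) - ∫ w in (-ϖ (n+1))..s, B (n+1) w)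
              ≤ ((∫ w in (-ϖ n)..s', B n w) - ∫ w in (-ϖ (n+1))..s', B (n+1) w) := by
          intro s s' h1 h2 h3
          have e1 : (∫ w in (-ϖ n)..s, B n w) + (∫ w in s..s', B n w)
              = ∫ w in (-ϖ n)..s', B n w :=
            integral_add_adjacent_intervals ((hBcont n).intervalIntegrable _ _)
              ((hBcont n).intervalIntegrable _ _)
          have e2 : (∫ w in (-ϖ (n+1))..s, B (n+1) w) + (∫ w in s..s', B (n+1) w)
              = ∫ w in (-ϖ (n+1))..s', B (n+1) w :=
            integral_add_adjacent_intervals ((hBcont (n+1)).intervalIntegrable _ _)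
              ((hBcont (n+1)).intervalIntegrable _ _)
          have e3 : (∫ w in s..s', B (n+1) w) ≤ ∫ w in s..s', B n w := by
            apply integral_mono_on h2 ((hBcont (n+1)).intervalIntegrable _ _)
              ((hBcont n).intervalIntegrable _ _)
            intro w hw
            exact hBle w (le_trans hw.2 h3)
          linarith
        have htot : 0 ≤ ∫ s in (-ϖ n)..0,
            ((∫ w in (-ϖ n)..s, B n w) - ∫ w in (-ϖ (n+1))..s, B (n+1) w) := by
          rw [integral_sub ((hGcont n).intervalIntegrable _ _)
            ((hGcont (n+1)).intervalIntegrable _ _)]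
          have e3 : (∫ s in (-ϖ (n+1))..(-ϖ n), ∫ w in (-ϖ (n+1))..s, B (n+1) w)
              + (∫ s in (-ϖ n)..0, ∫ w in (-ϖ (n+1))..s, B (n+1) w) = 1 := by
            rw [integral_add_adjacent_intervals ((hGcont (n+1)).intervalIntegrable _ _)
              ((hGcont (n+1)).intervalIntegrable _ _)]
            exact heqB (n+1)
          have e4 : 0 ≤ ∫ s in (-ϖ (n+1))..(-ϖ n), ∫ w in (-ϖ (n+1))..s, B (n+1) w :=
            integral_nonneg (by linarith) (fun s hs => hGnn (n+1) s hs.1)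
          linarith [heqB n]
        have hfin := tail_nonneg ((hGcont n).sub (hGcont (n+1))) hmono htot hc2.le ht
        simp only [Pi.sub_apply] at hfin
        linarith [hsub, hfin]
  have hdec : ∀ n, ∀ t ≤ (0:ℝ), β (n+1) t ≤ β n t := by
    intro n
    induction n with
    | zero => intro t ht; rw [hβ0 t ht]; exact (hgood 1).2.1 t ht
    | succ n ih => exact hstep2 n ih (hstep1 n ih)
  have hwmono : Monotone ϖ := monotone_nat_of_le_succ (fun n => hstep1 n (hdec n))
  have hwle : ∀ n, ϖ n ≤ Ψ := fun n => hwmono.ge_of_tendsto htend n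
  have hPsipos : 0 < Ψ := lt_of_lt_of_le (hwpos 0) (hwle 0)
  -- the limit function
  have hBanti : ∀ t, Antitone (fun n => B n t) := by
    intro t
    apply antitone_nat_of_succ_le
    intro n
    show max (β (n+1) (min t 0)) 0 ≤ max (β n (min t 0)) 0
    exact max_le_max (hdec n (min t 0) (min_le_right t 0)) le_rfl
  set y : ℝ → ℝ := fun t => ⨅ n, B n t with hydef
  have hbdd : ∀ t, BddBelow (Set.range fun n => B n t) := by
    intro t
    refine ⟨0, ?_⟩
    rintro x ⟨n, rfl⟩
    exact hB_nonneg n t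
  have hytend : ∀ t, Tendsto (fun n => B n t) atTop (nhds (y t)) := fun t =>
    tendsto_atTop_ciInf (hBanti t) (hbdd t)
  have hymeas : Measurable y := by
    apply Measurable.iInf
    intro n
    exact (hBcont n).measurable
  have hynn : ∀ t, 0 ≤ y t := fun t => le_ciInf (fun n => hB_nonneg n t)
  have hyle1 : ∀ t, y t ≤ 1 := fun t => le_trans (ciInf_le (hbdd t) 0) (hBle1 0 t)
  -- key: limit equation
  have hkey : ∀ t, -Ψ < t → t ≤ 0 → y t = 1 - ∫ s in (-Ψ)..t, ∫ w in (-Ψ)..s, y w := by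
    intro t htΨ ht2
    have hev : ∀ᶠ n in atTop, -ϖ n ≤ t := by
      have h1 : ∀ᶠ x in nhds Ψ, -t ≤ x := eventually_ge_nhds (by linarith)
      exact (htend.eventually h1).mono (fun n hn => by linarith)
    -- inner convergence
    have hinner : ∀ s : ℝ, Tendsto (fun n => ∫ w in (-Ψ)..s, B n w) atTop
        (nhds (∫ w in (-Ψ)..s, y w)) := by
      intro s
      apply intervalIntegral.tendsto_integral_filter_of_dominated_convergence
        (bound := fun _ => (1:ℝ))
      · exact Filter.Eventually.of_forall (fun n => (hBcont n).aestronglyMeasurable)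
      · apply Filter.Eventually.of_forall
        intro n
        apply MeasureTheory.ae_of_all
        intro x _
        rw [Real.norm_eq_abs, abs_le]
        exact ⟨by linarith [hB_nonneg n x], hBle1 n x⟩
      · exact intervalIntegrable_const
      · exact MeasureTheory.ae_of_all _ (fun x _ => hytend x)
    -- outer convergence
    have houter : Tendsto (fun n => ∫ s in (-Ψ)..t, ∫ w in (-Ψ)..s, B n w) atTop
        (nhds (∫ s in (-Ψ)..t, ∫ w in (-Ψ)..s, y w)) := by
      apply intervalIntegral.tendsto_integral_filter_of_dominated_convergence
        (bound := fun _ => Ψ)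
      · exact Filter.Eventually.of_forall (fun n => (Continuous.aestronglyMeasurable
          (intervalIntegral.continuous_primitive
            (fun a b => (hBcont n).intervalIntegrable a b) (-Ψ))))
      · apply Filter.Eventually.of_forall
        intro n
        apply MeasureTheory.ae_of_all
        intro x hx
        have hxm : x ∈ Set.Ioc (-Ψ) t := by rwa [Set.uIoc_of_le htΨ.le] at hx
        have hb1 : ∀ w ∈ Set.uIoc (-Ψ) x, ‖B n w‖ ≤ 1 := by
          intro w _
          rw [Real.norm_eq_abs, abs_le]
          exact ⟨by linarith [hB_nonneg n w], hBle1 n w⟩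
        calc ‖∫ w in (-Ψ)..x, B n w‖ ≤ 1 * |x - (-Ψ)| :=
              intervalIntegral.norm_integral_le_of_norm_le_const hb1
          _ = x + Ψ := by rw [one_mul, abs_of_nonneg (by linarith [hxm.1])]; ring
          _ ≤ Ψ := by linarith [hxm.2]
      · exact intervalIntegrable_const
      · exact MeasureTheory.ae_of_all _ (fun s _ => hinner s)
    -- difference bound
    have hdiffb : ∀ᶠ n in atTop,
        ‖(∫ s in (-Ψ)..t, ∫ w in (-Ψ)..s, B n w)
          - (∫ s in (-ϖ n)..t, ∫ w in (-ϖ n)..s, B n w)‖ ≤ 2 * Ψ * (Ψ - ϖ n) := by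
      filter_upwards [hev] with n hn
      have hWle : ϖ n ≤ Ψ := hwle n
      have hwp := hwpos n
      have hFc : Continuous fun s => ∫ w in (-Ψ)..s, B n w :=
        intervalIntegral.continuous_primitive (fun a b => (hBcont n).intervalIntegrable a b) (-Ψ)
      have hsplit1 : (∫ s in (-Ψ)..t, ∫ w in (-Ψ)..s, B n w) =
          (∫ s in (-Ψ)..(-ϖ n), ∫ w in (-Ψ)..s, B n w)
            + ∫ s in (-ϖ n)..t, ∫ w in (-Ψ)..s, B n w :=
        (integral_add_adjacent_intervals (hFc.intervalIntegrable _ _)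
          (hFc.intervalIntegrable _ _)).symm
      have hKsplit : ∀ s, (∫ w in (-Ψ)..s, B n w)
          = (∫ w in (-Ψ)..(-ϖ n), B n w) + ∫ w in (-ϖ n)..s, B n w := fun s =>
        (integral_add_adjacent_intervals ((hBcont n).intervalIntegrable _ _)
          ((hBcont n).intervalIntegrable _ _)).symm
      have hsplit2 : (∫ s in (-ϖ n)..t, ∫ w in (-Ψ)..s, B n w)
          = (t - (-ϖ n)) * (∫ w in (-Ψ)..(-ϖ n), B n w)
            + ∫ s in (-ϖ n)..t, ∫ w in (-ϖ n)..s, B n w := by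
        rw [integral_congr (g := fun s => (∫ w in (-Ψ)..(-ϖ n), B n w)
          + ∫ w in (-ϖ n)..s, B n w) (fun s _ => hKsplit s)]
        rw [integral_add intervalIntegrable_const ((hGcont n).intervalIntegrable _ _)]
        simp [mul_comm]
      have hKb : |∫ w in (-Ψ)..(-ϖ n), B n w| ≤ Ψ - ϖ n := by
        have hb1 : ∀ w ∈ Set.uIoc (-Ψ) (-ϖ n), ‖B n w‖ ≤ 1 := by
          intro w _
          rw [Real.norm_eq_abs, abs_le]
          exact ⟨by linarith [hB_nonneg n w], hBle1 n w⟩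
        have h2 := intervalIntegral.norm_integral_le_of_norm_le_const hb1
        rw [Real.norm_eq_abs] at h2
        calc |∫ w in (-Ψ)..(-ϖ n), B n w| ≤ 1 * |(-ϖ n) - (-Ψ)| := h2
          _ = Ψ - ϖ n := by rw [one_mul, abs_of_nonneg (by linarith)]; ring
      have hF1b : |∫ s in (-Ψ)..(-ϖ n), ∫ w in (-Ψ)..s, B n w| ≤ Ψ * (Ψ - ϖ n) := by
        have hb : ∀ s ∈ Set.uIoc (-Ψ) (-ϖ n), ‖∫ w in (-Ψ)..s, B n w‖ ≤ Ψ := by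
          intro s hs
          rw [Set.uIoc_of_le (by linarith)] at hs
          have hb1 : ∀ w ∈ Set.uIoc (-Ψ) s, ‖B n w‖ ≤ 1 := by
            intro w _
            rw [Real.norm_eq_abs, abs_le]
            exact ⟨by linarith [hB_nonneg n w], hBle1 n w⟩
          calc ‖∫ w in (-Ψ)..s, B n w‖ ≤ 1 * |s - (-Ψ)| :=
                intervalIntegral.norm_integral_le_of_norm_le_const hb1
            _ = s + Ψ := by rw [one_mul, abs_of_nonneg (by linarith [hs.1])]; ring
            _ ≤ Ψ := by linarith [hs.2]
        have h2 := intervalIntegral.norm_integral_le_of_norm_le_const hb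
        rw [Real.norm_eq_abs] at h2
        calc |∫ s in (-Ψ)..(-ϖ n), ∫ w in (-Ψ)..s, B n w| ≤ Ψ * |(-ϖ n) - (-Ψ)| := h2
          _ = Ψ * (Ψ - ϖ n) := by rw [abs_of_nonneg (by linarith)]; ring
      rw [hsplit1, hsplit2]
      have hrr : (∫ s in (-Ψ)..(-ϖ n), ∫ w in (-Ψ)..s, B n w)
          + ((t - (-ϖ n)) * (∫ w in (-Ψ)..(-ϖ n), B n w)
            + (∫ s in (-ϖ n)..t, ∫ w in (-ϖ n)..s, B n w))
          - (∫ s in (-ϖ n)..t, ∫ w in (-ϖ n)..s, B n w)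
          = (∫ s in (-Ψ)..(-ϖ n), ∫ w in (-Ψ)..s, B n w)
            + (t - (-ϖ n)) * (∫ w in (-Ψ)..(-ϖ n), B n w) := by ring
      rw [hrr, Real.norm_eq_abs]
      have habs := abs_add_le (∫ s in (-Ψ)..(-ϖ n), ∫ w in (-Ψ)..s, B n w)
        ((t - (-ϖ n)) * (∫ w in (-Ψ)..(-ϖ n), B n w))
      have habs2 : |(t - (-ϖ n)) * (∫ w in (-Ψ)..(-ϖ n), B n w)|
          = |t - (-ϖ n)| * |∫ w in (-Ψ)..(-ϖ n), B n w| := abs_mul _ _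
      have ht3 : |t - (-ϖ n)| ≤ Ψ := by
        rw [abs_of_nonneg (by linarith)]
        linarith
      have hKnn : (0:ℝ) ≤ |∫ w in (-Ψ)..(-ϖ n), B n w| := abs_nonneg _
      nlinarith [abs_nonneg (t - (-ϖ n))]
    -- convergence of the shifted integrals
    have hbound0 : Tendsto (fun n => 2 * Ψ * (Ψ - ϖ n)) atTop (nhds 0) := by
      have h1 : Tendsto (fun n => Ψ - ϖ n) atTop (nhds (Ψ - Ψ)) :=
        tendsto_const_nhds.sub htend
      rw [sub_self] at h1
      have := h1.const_mul (2 * Ψ)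
      simpa using this
    have hdiff0 : Tendsto (fun n => (∫ s in (-Ψ)..t, ∫ w in (-Ψ)..s, B n w)
        - (∫ s in (-ϖ n)..t, ∫ w in (-ϖ n)..s, B n w)) atTop (nhds 0) :=
      squeeze_zero_norm' hdiffb hbound0
    have hA : Tendsto (fun n => ∫ s in (-ϖ n)..t, ∫ w in (-ϖ n)..s, B n w) atTop
        (nhds (∫ s in (-Ψ)..t, ∫ w in (-Ψ)..s, y w)) := by
      have h1 := houter.sub hdiff0
      rw [sub_zero] at h1
      apply h1.congr
      intro n
      ring
    have hbetaA : Tendsto (fun n => β (n+1) t) atTop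
        (nhds (1 - ∫ s in (-Ψ)..t, ∫ w in (-Ψ)..s, y w)) := by
      apply Filter.Tendsto.congr' ?_ (tendsto_const_nhds.sub hA)
      filter_upwards [hev] with n hn
      exact (hmidB n t hn ht2).symm
    have hbetay : Tendsto (fun n => β (n+1) t) atTop (nhds (y t)) := by
      have h1 : Tendsto (fun n => B (n+1) t) atTop (nhds (y t)) :=
        (hytend t).comp (tendsto_add_atTop_nat 1)
      apply h1.congr
      intro n
      rw [hB_eq (n+1) t ht2, max_eq_left ((hgood (n+1)).2.2.2 t ht2)]
    exact tendsto_nhds_unique hbetay hbetaA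
  -- boundary values
  have hy0 : y 0 = 0 := by
    have hB0 : ∀ n, B (n+1) 0 = 0 := by
      intro n
      rw [hB_eq (n+1) 0 le_rfl]
      have : β (n+1) 0 = 0 := by
        rw [hmid n 0 (by linarith [hwpos n]) le_rfl, heq n]
        ring
      rw [this]
      simp
    have h1 : Tendsto (fun n => B (n+1) 0) atTop (nhds (y 0)) :=
      (hytend 0).comp (tendsto_add_atTop_nat 1)
    have h2 : Tendsto (fun n => B (n+1) 0) atTop (nhds 0) := by
      have : (fun n => B (n+1) 0) = fun _ => (0:ℝ) := funext hB0
      rw [this]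
      exact tendsto_const_nhds
    exact tendsto_nhds_unique h1 h2
  have hyPsi : y (-Ψ) = 1 := by
    have hB1 : ∀ n, B n (-Ψ) = 1 := by
      intro n
      rw [hB_eq n (-Ψ) (by linarith)]
      have hb : β n (-Ψ) = 1 := by
        cases n with
        | zero => exact hβ0 (-Ψ) (by linarith)
        | succ m => exact hup m (-Ψ) (by linarith [hwle m])
      rw [hb]
      simp
    have h1 : Tendsto (fun n => B n (-Ψ)) atTop (nhds (y (-Ψ))) := hytend (-Ψ)
    have h2 : Tendsto (fun n => B n (-Ψ)) atTop (nhds 1) := by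
      have : (fun n => B n (-Ψ)) = fun _ => (1:ℝ) := funext hB1
      rw [this]
      exact tendsto_const_nhds
    exact tendsto_nhds_unique h1 h2
  exact cos_identify hPsipos hymeas hynn hyle1 hyPsi hy0 hkey

lemma integral_one_of (f : ℝ → ℝ) (a b : ℝ) (h : ∀ w ∈ Set.uIcc a b, f w = 1) :
    ∫ w in a..b, f w = b - a := by
  rw [integral_congr (g := fun _ => (1:ℝ)) h]; simp

lemma integral_linear (a b : ℝ) : (∫ s in a..b, (s - a)) = (b - a) ^ 2 / 2 := by
  have := intervalIntegral.integral_comp_sub_right (a := a) (b := b) (fun x => x) a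
  rw [this, integral_id]; ring

lemma double_const (f : ℝ → ℝ) (hf : ∀ w ≤ (0:ℝ), f w = 1) {c t : ℝ}
    (h1 : -c ≤ t) (h2 : t ≤ 0) :
    ∫ s in (-c)..t, (∫ w in (-c)..s, f w) = (t + c) ^ 2 / 2 := by
  have houter : EqOn (fun s => ∫ w in (-c)..s, f w) (fun s => s - (-c)) (Set.uIcc (-c) t) := by
    intro s hs
    rw [uIcc_of_le h1] at hs
    have hs0 : s ≤ 0 := le_trans hs.2 h2
    exact integral_one_of f _ _ (fun w hw => by
      rw [uIcc_of_le hs.1] at hw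
      exact hf w (le_trans hw.2 hs0))
  rw [integral_congr houter, integral_linear]; ring_nf

lemma r_eq {Δ : ℝ} {r : ℝ → ℝ} (h : IsDelayCosine Δ r) :
    ∀ t, 0 ≤ t → t ≤ Δ → r t = 1 - t ^ 2 / 2 := by
  intro t ht0 htΔ
  have hd : ∀ x, 0 ≤ x → x ≤ Δ → deriv r x = -x := by
    intro x hx0 hxΔ
    rw [h.2.2 x hx0]
    have : (∫ u in (0:ℝ)..x, r (u - Δ)) = x - 0 := by
      apply integral_one_of
      intro u hu
      rw [uIcc_of_le hx0] at hu
      exact h.1 _ (by linarith [hu.1, hu.2])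
    rw [this]; ring
  have hint : IntervalIntegrable (deriv r) MeasureTheory.volume 0 t := by
    rw [intervalIntegrable_iff]
    apply ((continuousOn_id.neg).integrableOn_compact isCompact_Icc).mono_set
      (Set.uIoc_subset_uIcc ..) |>.congr_fun ?_ measurableSet_uIoc
    · intro x hx
      rw [Set.uIoc_of_le ht0] at hx
      exact (hd x (le_of_lt hx.1) (le_trans hx.2 htΔ)).symm
  have hftc : (∫ x in (0:ℝ)..t, deriv r x) = r t - r 0 := by
    apply integral_eq_sub_of_hasDerivAt
    · intro x hx
      rw [uIcc_of_le ht0] at hx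
      exact h.2.1 x hx.1
    · exact hint
  have hval : (∫ x in (0:ℝ)..t, deriv r x) = - (t ^ 2 / 2) := by
    rw [integral_congr (g := fun x => -x) (fun x hx => by
      rw [uIcc_of_le ht0] at hx
      exact hd x hx.1 (le_trans hx.2 htΔ))]
    rw [intervalIntegral.integral_neg, integral_id]; ring
  have hr0 : r 0 = 1 := h.1 0 le_rfl
  rw [hval, hr0] at hftc; linarith

lemma theta_eq {Δ : ℝ} {r : ℝ → ℝ} {θ : ℝ} (hΔ : Real.sqrt 2 ≤ Δ)
    (h : IsDelayCosine Δ r) (hz : IsFirstZero r θ) : θ = Real.sqrt 2 := by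
  have hs2 : (0:ℝ) < Real.sqrt 2 := Real.sqrt_pos.mpr (by norm_num)
  have hsq : Real.sqrt 2 ^ 2 = 2 := Real.sq_sqrt (by norm_num)
  have hrs2 : r (Real.sqrt 2) = 0 := by
    rw [r_eq h _ hs2.le hΔ]; rw [hsq]; ring
  have hθle : θ ≤ Real.sqrt 2 := by
    by_contra hlt
    push_neg at hlt
    exact absurd hrs2 (ne_of_gt (hz.2.2 _ hs2.le hlt))
  have hrθ : r θ = 0 := hz.2.1
  rw [r_eq h _ hz.1.le (le_trans hθle hΔ)] at hrθ
  have : θ ^ 2 = 2 := by linarith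
  nlinarith [hz.1, Real.sq_sqrt (show (0:ℝ) ≤ 2 by norm_num), Real.sqrt_nonneg 2]


lemma part2 {Δ : ℝ} (hΔ : 2 * Real.sqrt 2 ≤ Δ) {r : ℝ → ℝ} {θ : ℝ}
    (hdc : IsDelayCosine Δ r) (hfz : IsFirstZero r θ)
    (β : ℕ → ℝ → ℝ) (ϖ : ℕ → ℝ) (Ψ : ℝ) (y : ℝ → ℝ)
    (hseq : IsBetaSeq (gAux 1 Δ θ r) β ϖ)
    (htend : Filter.Tendsto ϖ Filter.atTop (nhds Ψ))
    (hy : ∀ t, Filter.Tendsto (fun n => β n t) Filter.atTop (nhds (y t))) :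
    Ψ = Real.sqrt 2 ∧
      ∀ w ∈ Set.Icc (-Real.sqrt 2) (0:ℝ), y w = 1 - (w + Real.sqrt 2) ^ 2 / 2 := by
  have hs2 : (0:ℝ) < Real.sqrt 2 := Real.sqrt_pos.mpr (by norm_num)
  have hsq : Real.sqrt 2 ^ 2 = 2 := Real.sq_sqrt (by norm_num)
  have hΔ2 : Real.sqrt 2 ≤ Δ := by linarith
  have hθ : θ = Real.sqrt 2 := theta_eq hΔ2 hdc hfz
  set g : ℝ → ℝ := gAux 1 Δ θ r with hgdef
  -- g = 1 on [-√2, 0]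
  have hg1 : ∀ w, -Real.sqrt 2 ≤ w → w ≤ 0 → g w = 1 := by
    intro w hw1 hw2
    have hmem : w ∈ Set.Icc (-Δ) (0:ℝ) := ⟨by linarith, hw2⟩
    rw [hgdef]
    unfold gAux
    rw [Set.indicator_of_mem hmem, hθ]
    have harg : θ - w - Δ ≤ 0 := by rw [hθ]; linarith
    rw [hθ] at harg
    rw [hdc.1 _ harg]; ring
  -- g ≤ 1 everywhere
  have hgle : ∀ w, g w ≤ 1 := by
    intro w
    rw [hgdef]; unfold gAux
    by_cases hmem : w ∈ Set.Icc (-Δ) (0:ℝ)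
    · rw [Set.indicator_of_mem hmem]
      have hwge : -Δ ≤ w := hmem.1
      rcases le_or_gt (θ - w - Δ) 0 with harg | harg
      · rw [hdc.1 _ harg]; norm_num
      · have hargle : θ - w - Δ ≤ Δ := by
          rw [hθ]; linarith
        rw [r_eq hdc _ harg.le hargle]
        nlinarith [sq_nonneg (θ - w - Δ)]
    · rw [Set.indicator_of_notMem hmem]; norm_num
  obtain ⟨hβ0, hrec⟩ := hseq
  -- the max is identically 1 on (-∞, 0]
  have key : ∀ n, ∀ w ≤ (0:ℝ), max (β n w) (g w) = 1 := by
    intro n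
    induction n with
    | zero => intro w hw; rw [hβ0 w hw]; exact max_eq_left (hgle w)
    | succ n ih =>
      have hϖpos := (hrec n).1.1
      have hϖn : ϖ n = Real.sqrt 2 := by
        have heq := (hrec n).1.2
        unfold doubleInt at heq
        rw [double_const _ ih (by linarith) le_rfl] at heq
        have : ϖ n ^ 2 = 2 := by nlinarith
        nlinarith [Real.sqrt_nonneg 2]
      intro w hw
      rcases le_or_gt w (-Real.sqrt 2) with hcase | hcase
      · rw [(hrec n).2.1 w (by rw [hϖn]; exact hcase)]
        exact max_eq_left (hgle w)
      · have hval : β (n+1) w = 1 - (w + Real.sqrt 2) ^ 2 / 2 := by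
          rw [(hrec n).2.2 w (by rw [hϖn]; linarith) hw,
            double_const _ ih (by rw [hϖn]; linarith) hw, hϖn]
        have hβle : β (n+1) w ≤ 1 := by nlinarith [sq_nonneg (w + Real.sqrt 2)]
        rw [hg1 w hcase.le hw] at *
        exact max_eq_right hβle
  have hϖall : ∀ n, ϖ n = Real.sqrt 2 := by
    intro n
    have hϖpos := (hrec n).1.1
    have heq := (hrec n).1.2
    unfold doubleInt at heq
    rw [double_const _ (key n) (by linarith) le_rfl] at heq
    have : ϖ n ^ 2 = 2 := by nlinarith
    nlinarith [Real.sqrt_nonneg 2]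
  constructor
  · refine tendsto_nhds_unique htend ?_
    have : ϖ = fun _ => Real.sqrt 2 := funext hϖall
    rw [this]; exact tendsto_const_nhds
  · intro w hw
    have hval : ∀ n, β (n+1) w = 1 - (w + Real.sqrt 2) ^ 2 / 2 := by
      intro n
      rw [(hrec n).2.2 w (by rw [hϖall n]; exact hw.1) hw.2,
        double_const _ (key n) (by rw [hϖall n]; exact hw.1) hw.2, hϖall n]
    refine tendsto_nhds_unique (hy w) ?_
    refine Filter.Tendsto.congr' ?_ (tendsto_const_nhds (x := 1 - (w + Real.sqrt 2) ^ 2 / 2))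
    rw [Filter.eventuallyEq_iff_exists_mem]
    exact ⟨Set.Ici 1, Filter.mem_atTop 1, fun n hn => by
      obtain ⟨m, rfl⟩ := Nat.exists_eq_add_of_le (hn : 1 ≤ n)
      rw [Nat.add_comm] at *
      exact (hval m).symm⟩

end PsiAux

/-- `Ψ(ρ,0) = π/2`, and for `Δ ≥ 2√2`, `Ψ(1,Δ) = √2` with
`y_{1,Δ}(w) = 1 − (w+√2)²/2` on `[−√2, 0]`. -/
theorem psi_special_values
    (r : ℝ → ℝ → ℝ) (θ : ℝ → ℝ)
    (hr : ∀ Δ, 0 ≤ Δ → IsDelayCosine Δ (r Δ) ∧ IsFirstZero (r Δ) (θ Δ)) :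
    (∀ ρ : ℝ, 0 < ρ → ∀ (β : ℕ → ℝ → ℝ) (ϖ : ℕ → ℝ) (Ψ : ℝ),
      IsBetaSeq (gAux ρ 0 (θ 0) (r 0)) β ϖ →
      Filter.Tendsto ϖ Filter.atTop (nhds Ψ) → Ψ = Real.pi / 2) ∧
    (∀ Δ : ℝ, 2 * Real.sqrt 2 ≤ Δ →
      ∀ (β : ℕ → ℝ → ℝ) (ϖ : ℕ → ℝ) (Ψ : ℝ) (y : ℝ → ℝ),
      IsBetaSeq (gAux 1 Δ (θ Δ) (r Δ)) β ϖ →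
      Filter.Tendsto ϖ Filter.atTop (nhds Ψ) →
      (∀ t, Filter.Tendsto (fun n => β n t) Filter.atTop (nhds (y t))) →
      Ψ = Real.sqrt 2 ∧
      ∀ w ∈ Set.Icc (-Real.sqrt 2) (0:ℝ), y w = 1 - (w + Real.sqrt 2) ^ 2 / 2) := by
  constructor
  · intro ρ hρ β ϖ Ψ hseq htend
    obtain ⟨hdc, hfz⟩ := hr 0 le_rfl
    have hg0 : gAux ρ 0 (θ 0) (r 0) = fun _ => (0:ℝ) := by
      funext w
      unfold gAux
      by_cases hw : w ∈ Set.Icc (-(0:ℝ)) (0:ℝ)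
      · rw [Set.indicator_of_mem hw]
        have hw0 : w = 0 := le_antisymm hw.2 (by simpa using hw.1)
        rw [hw0]
        simp only [sub_zero]
        rw [hfz.2.1]
        ring
      · rw [Set.indicator_of_notMem hw]
    obtain ⟨hβ0, hrec⟩ := hseq
    simp only [doubleInt, hg0] at hrec
    exact PsiAux.part1 β ϖ Ψ hβ0 (fun n => (hrec n).1.1) (fun n => (hrec n).1.2)
      (fun n t htn => (hrec n).2.1 t htn) (fun n t h1 h2 => (hrec n).2.2 t h1 h2) htend
  · intro Δ hΔ β ϖ Ψ y hseq htend hy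
    obtain ⟨hdc, hfz⟩ := hr Δ (le_trans (by positivity) hΔ)
    exact PsiAux.part2 hΔ hdc hfz β ϖ Ψ y hseq htend hy
end
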